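/- arXiv:2506.23037 — 10 statements merged into one kernel-verified Lean document; each statement's English description precedes it below -/
import Mathlib

section
/- Let F be a field with char F ≠ 2 and let n ≥ 1. Then the queer associative superalgebra Q(n) admits no superinvolution: there is no F-linear, parity-preserving bijection φ: Q(n) → Q(n) with φ ∘ φ = id and φ(xy) = (−1)^{|x||y|} φ(y)φ(x) for all homogeneous x, y ∈ Q(n). -/
/-- The queer associative superalgebra `Q(n)`: the subalgebra of `M_{2n}(F)`
consisting of all block matrices `[[A, B], [B, A]]` with `A, B ∈ M_n(F)`. -/
def queerAlg (F : Type*) [Field F] (n : ℕ) :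
    Subalgebra F (Matrix (Fin n ⊕ Fin n) (Fin n ⊕ Fin n) F) where
  carrier := {M | ∃ A B : Matrix (Fin n) (Fin n) F, M = Matrix.fromBlocks A B B A}
  mul_mem' := by
    rintro M N ⟨A, B, rfl⟩ ⟨A', B', rfl⟩
    refine ⟨A * A' + B * B', A * B' + B * A', ?_⟩
    rw [Matrix.fromBlocks_multiply, add_comm (B * A') (A * B'), add_comm (B * B') (A * A')]
  one_mem' := ⟨1, 0, Matrix.fromBlocks_one.symm⟩
  add_mem' := by
    rintro M N ⟨A, B, rfl⟩ ⟨A', B', rfl⟩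
    exact ⟨A + A', B + B', (Matrix.fromBlocks_add _ _ _ _ _ _ _ _)⟩
  zero_mem' := ⟨0, 0, by simp⟩
  algebraMap_mem' := fun r => ⟨r • 1, 0, by
    rw [Algebra.algebraMap_eq_smul_one, ← Matrix.fromBlocks_one, Matrix.fromBlocks_smul,
      smul_zero]⟩

/-- The parity components of `Q(n)`: the even part consists of the matrices
`[[A, 0], [0, A]]`, the odd part of the matrices `[[0, B], [B, 0]]`. -/
def queerPart (F : Type*) [Field F] (n : ℕ) (i : ZMod 2) :
    Set (Matrix (Fin n ⊕ Fin n) (Fin n ⊕ Fin n) F) :=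
  if i = 0 then {M | ∃ A : Matrix (Fin n) (Fin n) F, M = Matrix.fromBlocks A 0 0 A}
  else {M | ∃ B : Matrix (Fin n) (Fin n) F, M = Matrix.fromBlocks 0 B B 0}

set_option synthInstance.maxHeartbeats 1000000 in
set_option maxHeartbeats 2000000 in
/-- Let `F` be a field with `char F ≠ 2` and `n ≥ 1`. Then the queer
associative superalgebra `Q(n)` admits no superinvolution: there is no `F`-linear,
parity-preserving bijection `φ : Q(n) → Q(n)` with `φ ∘ φ = id` and
`φ(xy) = (−1)^{|x||y|} φ(y)φ(x)` for all homogeneous `x, y ∈ Q(n)`. -/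
theorem stmt_3 {F : Type*} [Field F] (h2 : (2 : F) ≠ 0) (n : ℕ) (hn : 1 ≤ n) :
    ¬ ∃ φ : queerAlg F n →ₗ[F] queerAlg F n,
      Function.Bijective φ ∧
      (∀ x : queerAlg F n, φ (φ x) = x) ∧
      (∀ (i : ZMod 2) (x : queerAlg F n),
        (x : Matrix (Fin n ⊕ Fin n) (Fin n ⊕ Fin n) F) ∈ queerPart F n i →
        ((φ x : queerAlg F n) : Matrix (Fin n ⊕ Fin n) (Fin n ⊕ Fin n) F) ∈ queerPart F n i) ∧
      (∀ (i j : ZMod 2) (x y : queerAlg F n),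
        (x : Matrix (Fin n ⊕ Fin n) (Fin n ⊕ Fin n) F) ∈ queerPart F n i →
        (y : Matrix (Fin n ⊕ Fin n) (Fin n ⊕ Fin n) F) ∈ queerPart F n j →
        φ (x * y) = (-1 : F) ^ (i.val * j.val) • (φ y * φ x)) := by
  rintro ⟨φ, hbij, hinv, hpar, hmul⟩
  set J : queerAlg F n := ⟨Matrix.fromBlocks 0 1 1 0, 0, 1, rfl⟩ with hJdef
  have hJcoe : (J : Matrix (Fin n ⊕ Fin n) (Fin n ⊕ Fin n) F)
      = Matrix.fromBlocks 0 1 1 0 := rfl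
  have hJodd : (J : Matrix (Fin n ⊕ Fin n) (Fin n ⊕ Fin n) F) ∈ queerPart F n 1 := by
    rw [queerPart, if_neg (by decide : ¬ (1 : ZMod 2) = 0)]
    exact ⟨1, rfl⟩
  have h1even : ((1 : queerAlg F n) : Matrix (Fin n ⊕ Fin n) (Fin n ⊕ Fin n) F)
      ∈ queerPart F n 0 := by
    rw [queerPart, if_pos rfl]
    exact ⟨1, by simp [Matrix.fromBlocks_one]⟩
  have hJJ : J * J = 1 := by
    apply Subtype.ext
    show ((J * J : queerAlg F n) : Matrix (Fin n ⊕ Fin n) (Fin n ⊕ Fin n) F) = 1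
    rw [MulMemClass.coe_mul, hJcoe, Matrix.fromBlocks_multiply]
    simp [Matrix.fromBlocks_one]
  -- φ J is odd
  have hφJodd := hpar 1 J hJodd
  rw [queerPart, if_neg (by decide : ¬ (1 : ZMod 2) = 0)] at hφJodd
  obtain ⟨C, hC⟩ := hφJodd
  -- C commutes with every matrix
  have hcomm : ∀ A : Matrix (Fin n) (Fin n) F, A * C = C * A := by
    intro A
    set e0 : queerAlg F n := ⟨Matrix.fromBlocks A 0 0 A, A, 0, rfl⟩ with he0def
    have he0 : (e0 : Matrix (Fin n ⊕ Fin n) (Fin n ⊕ Fin n) F) ∈ queerPart F n 0 := by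
      rw [queerPart, if_pos rfl]; exact ⟨A, rfl⟩
    have heeven := hpar 0 e0 he0
    rw [queerPart, if_pos rfl] at heeven
    obtain ⟨A', hA'⟩ := heeven
    have hφe : φ (φ e0) = e0 := hinv e0
    have hJe : J * φ e0 = φ e0 * J := by
      apply Subtype.ext
      rw [MulMemClass.coe_mul, MulMemClass.coe_mul, hJcoe, hA',
        Matrix.fromBlocks_multiply, Matrix.fromBlocks_multiply]
      simp
    have h1 := hmul 1 0 J (φ e0) hJodd (hpar 0 e0 he0)
    have h2 := hmul 0 1 (φ e0) J (hpar 0 e0 he0) hJodd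
    rw [hJe] at h1
    rw [h1] at h2
    have hval : ((1 : ZMod 2).val * (0 : ZMod 2).val = 0) ∧
        ((0 : ZMod 2).val * (1 : ZMod 2).val = 0) := by decide
    rw [hval.1, hval.2, pow_zero, one_smul, one_smul, hφe] at h2
    -- h2 : e0 * φ J = φ J * e0
    have h3 := congrArg (fun x : queerAlg F n =>
      (x : Matrix (Fin n ⊕ Fin n) (Fin n ⊕ Fin n) F)) h2
    simp only [MulMemClass.coe_mul] at h3
    rw [hC] at h3
    have h4 := congrArg Matrix.toBlocks₁₂ h3
    simp only [he0def, Matrix.fromBlocks_multiply, Matrix.toBlocks_fromBlocks₁₂] at h4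
    simpa using h4
  -- hence C is scalar
  obtain ⟨c, hc⟩ := Matrix.mem_range_scalar_of_commute_single
    (fun i j _ => hcomm (Matrix.single i j 1))
  have hCsmul : C = c • (1 : Matrix (Fin n) (Fin n) F) := by
    rw [← hc]; ext i j; simp [Matrix.scalar_apply, Matrix.one_apply, Matrix.diagonal_apply]
  have hφJ : φ J = c • J := by
    apply Subtype.ext
    show ((φ J : queerAlg F n) : Matrix (Fin n ⊕ Fin n) (Fin n ⊕ Fin n) F)
      = ((c • J : queerAlg F n) : Matrix (Fin n ⊕ Fin n) (Fin n ⊕ Fin n) F)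
    rw [hC, hCsmul]
    show _ = c • (Matrix.fromBlocks 0 1 1 0 : Matrix (Fin n ⊕ Fin n) (Fin n ⊕ Fin n) F)
    rw [Matrix.fromBlocks_smul, smul_zero]
  have hJne : J ≠ 0 := by
    intro h
    have := congrArg (fun x : queerAlg F n =>
      (x : Matrix (Fin n ⊕ Fin n) (Fin n ⊕ Fin n) F)
        (Sum.inl ⟨0, hn⟩) (Sum.inr ⟨0, hn⟩)) h
    simp [hJcoe, Matrix.fromBlocks, Matrix.one_apply] at this
  have hc2 : c * c = 1 := by
    have h5 := hinv J
    rw [hφJ, map_smul, hφJ, smul_smul] at h5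
    have h6 := congrArg (fun x : queerAlg F n =>
      (x : Matrix (Fin n ⊕ Fin n) (Fin n ⊕ Fin n) F)
        (Sum.inl ⟨0, hn⟩) (Sum.inr ⟨0, hn⟩)) h5
    simpa [hJcoe, Matrix.fromBlocks, Matrix.one_apply] using h6
  -- φ 1 = -1
  have hφ1 : φ 1 = -1 := by
    have h7 := hmul 1 1 J J hJodd hJodd
    rw [hJJ, hφJ] at h7
    rw [show ((1 : ZMod 2).val * (1 : ZMod 2).val) = 1 from by decide, pow_one] at h7
    rw [smul_mul_smul_comm, hJJ, smul_smul, hc2] at h7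
    rw [h7, mul_one, neg_one_smul]
  have h8 := hmul 0 0 1 1 h1even h1even
  rw [one_mul, hφ1] at h8
  rw [show ((0 : ZMod 2).val * (0 : ZMod 2).val) = 0 from by decide, pow_zero, one_smul] at h8
  have h8' : (-1 : queerAlg F n) = 1 := by
    rw [h8]; exact (neg_mul_neg (1 : queerAlg F n) 1).trans (one_mul 1)
  have h9 := congrArg (fun x : queerAlg F n =>
    (x : Matrix (Fin n ⊕ Fin n) (Fin n ⊕ Fin n) F)
      (Sum.inl ⟨0, hn⟩) (Sum.inl ⟨0, hn⟩)) h8'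
  simp [Matrix.one_apply] at h9
  exact h2 (by linear_combination -h9)
end

section
/- Let G be an abelian group, let F be an algebraically closed field with char F ≠ 2, and let D be a finite-dimensional G-graded-division superalgebra over F. Then sZ(D) = Z(D) ∩ D⁰; in particular, the supercenter of D contains no nonzero odd elements. -/
/-- The component `sZ(R)^i` of the supercenter of a `G × ℤ/2`-graded algebra `R`. -/
def superCenterComp {G F R : Type*} [AddCommGroup G] [Field F] [Ring R] [Algebra F R]
    (𝒜 : G × ZMod 2 → Submodule F R) (i : ZMod 2) : Set R :=
  {c | c ∈ (⨆ g : G, 𝒜 (g, i)) ∧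
    ∀ (j : ZMod 2), ∀ r ∈ (⨆ g : G, 𝒜 (g, j)),
      c * r = (-1 : R) ^ (i.val * j.val) * (r * c)}

/-- An `AddRightCancelMonoid` structure definitionally extending the ambient
`AddMonoid` structure of an additive commutative group. -/
def StmtFour.rc {ι : Type*} [AddCommGroup ι] : AddRightCancelMonoid ι :=
  { (inferInstance : AddMonoid ι) with
    add_right_cancel := fun _ _ _ h => add_right_cancel h }

/-- An `AddLeftCancelMonoid` structure definitionally extending the ambient
`AddMonoid` structure of an additive commutative group. -/
def StmtFour.lc {ι : Type*} [AddCommGroup ι] : AddLeftCancelMonoid ι :=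
  { (inferInstance : AddMonoid ι) with
    add_left_cancel := fun _ _ _ h => add_left_cancel h }

set_option maxHeartbeats 1000000 in
set_option synthInstance.maxHeartbeats 200000 in
theorem StmtFour.odd_superCenter_eq_zero {G F D : Type*} [AddCommGroup G] [DecidableEq G]
    [Field F] (h2 : (2 : F) ≠ 0)
    [Ring D] [Algebra F D]
    (𝒜 : G × ZMod 2 → Submodule F D) [inst : GradedAlgebra 𝒜]
    (hdiv : ∀ gi : G × ZMod 2, ∀ d ∈ 𝒜 gi, d ≠ 0 → IsUnit d)
    {b : D} (hb : b ∈ superCenterComp 𝒜 1) : b = 0 := by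
  obtain ⟨hbm, hbc⟩ := hb
  classical
  -- even components of b vanish since b lies in the odd part
  have hproj0 : ∀ g : G, (DirectSum.decompose 𝒜 b (g, 0) : D) = 0 := by
    intro g
    have hle : (⨆ g' : G, 𝒜 (g', 1)) ≤
        (LinearMap.ker ((𝒜 (g, 0)).subtype.comp
          ((DirectSum.component F (G × ZMod 2) (fun i => 𝒜 i) (g, 0)).comp
            (DirectSum.decomposeLinearEquiv 𝒜).toLinearMap))) := by
      refine iSup_le fun g' x hx => ?_
      simp only [LinearMap.mem_ker, LinearMap.comp_apply, LinearEquiv.coe_toLinearMap,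
        DirectSum.decomposeLinearEquiv_apply, Submodule.coe_subtype]
      exact DirectSum.decompose_of_mem_ne 𝒜 hx (by simp)
    have := hle hbm
    simpa [← DirectSum.apply_eq_component, DirectSum.decomposeLinearEquiv_apply] using this
  -- odd components square to zero, hence vanish
  have hproj1 : ∀ g : G, (DirectSum.decompose 𝒜 b (g, 1) : D) = 0 := by
    intro g
    set u : D := (DirectSum.decompose 𝒜 b (g, 1) : D) with hu
    have humem : u ∈ 𝒜 (g, 1) := (DirectSum.decompose 𝒜 b (g, 1)).2
    have humem' : u ∈ ⨆ g' : G, 𝒜 (g', 1) := le_iSup (fun g' => 𝒜 (g', 1)) g humem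
    have h1 : b * u = -(u * b) := by
      have := hbc 1 u humem'
      rw [show ((1 : ZMod 2).val * (1 : ZMod 2).val) = 1 by rfl] at this
      simpa using this
    have h2' : (DirectSum.decompose 𝒜 (b * u) ((g, 1) + (g, 1)) : D)
        = (DirectSum.decompose 𝒜 (-(u * b)) ((g, 1) + (g, 1)) : D) := by
      rw [h1]
    rw [@DirectSum.coe_decompose_mul_add_of_right_mem (G × ZMod 2) D _ _ _ _ _ 𝒜 _ _
      _ inst b u humem] at h2'
    have h4 : (DirectSum.decompose 𝒜 (-(u * b)) ((g, 1) + (g, 1)) : D)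
        = -((DirectSum.decompose 𝒜 (u * b) ((g, 1) + (g, 1)) : D)) := by
      have hneg : DirectSum.decompose 𝒜 (-(u * b)) = -(DirectSum.decompose 𝒜 (u * b)) :=
        map_neg (DirectSum.decomposeAddEquiv 𝒜) (u * b)
      rw [hneg]; exact NegMemClass.coe_neg _
    rw [h4, @DirectSum.coe_decompose_mul_add_of_left_mem (G × ZMod 2) D _ _ _ _ _ 𝒜 _ _
      _ inst u b humem] at h2'
    -- h2' : u * u = -(u * u)
    have hsq : u * u = 0 := by
      have hz : (2 : F) • (u * u) = 0 := by
        rw [two_smul]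
        rw [← hu] at h2'
        show u * u + u * u = 0
        nth_rewrite 2 [h2']
        exact add_neg_cancel _
      rcases smul_eq_zero.mp hz with h | h
      · exact absurd h h2
      · exact h
    by_contra hu0
    have hunit := hdiv (g, 1) u humem hu0
    exact hu0 (hunit.mul_left_cancel (by rw [hsq, mul_zero]))
  -- conclude b = 0
  have hsum := DirectSum.sum_support_decompose 𝒜 b
  rw [← hsum]
  apply Finset.sum_eq_zero
  intro i _
  rcases i with ⟨g, j⟩
  fin_cases j
  · exact hproj0 g
  · exact hproj1 g

/-- Let `G` be an abelian group, `F` an algebraically closed field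
with `char F ≠ 2`, and `D` a finite-dimensional `G`-graded-division superalgebra
over `F`. Then `sZ(D) = Z(D) ∩ D⁰`; in particular the supercenter of `D` contains
no nonzero odd elements. -/
theorem stmt_4 {G F D : Type*} [AddCommGroup G] [DecidableEq G]
    [Field F] [IsAlgClosed F] (h2 : (2 : F) ≠ 0)
    [Ring D] [Algebra F D] [FiniteDimensional F D]
    (𝒜 : G × ZMod 2 → Submodule F D) [GradedAlgebra 𝒜]
    (hdiv : ∀ gi : G × ZMod 2, ∀ d ∈ 𝒜 gi, d ≠ 0 → IsUnit d) :
    {c : D | ∃ a ∈ superCenterComp 𝒜 0, ∃ b ∈ superCenterComp 𝒜 1, c = a + b} =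
      {c : D | c ∈ Subring.center D ∧ c ∈ (⨆ g : G, 𝒜 (g, 0))} := by
  ext c
  simp only [Set.mem_setOf_eq]
  constructor
  · rintro ⟨a, ⟨ham, hac⟩, b, hb, rfl⟩
    have hb0 : b = 0 := StmtFour.odd_superCenter_eq_zero h2 𝒜 hdiv hb
    subst hb0
    rw [add_zero]
    refine ⟨?_, ham⟩
    rw [Subring.mem_center_iff]
    intro x
    have htop : (⨆ gi : G × ZMod 2, 𝒜 gi) = ⊤ :=
      (DirectSum.Decomposition.isInternal 𝒜).submodule_iSup_eq_top
    have hle : (⨆ gi : G × ZMod 2, 𝒜 gi) ≤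
        LinearMap.ker (LinearMap.mulLeft F a - LinearMap.mulRight F a) := by
      refine iSup_le ?_
      rintro ⟨g, j⟩ r hr
      have hr' : r ∈ ⨆ g' : G, 𝒜 (g', j) := le_iSup (fun g' => 𝒜 (g', j)) g hr
      have hcomm := hac j r hr'
      simp only [ZMod.val_zero, zero_mul, pow_zero, one_mul] at hcomm
      simp only [LinearMap.mem_ker, LinearMap.sub_apply, LinearMap.mulLeft_apply,
        LinearMap.mulRight_apply, sub_eq_zero]
      exact hcomm
    have hx : x ∈ LinearMap.ker (LinearMap.mulLeft F a - LinearMap.mulRight F a) := by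
      apply hle
      rw [htop]; trivial
    simp only [LinearMap.mem_ker, LinearMap.sub_apply, LinearMap.mulLeft_apply,
      LinearMap.mulRight_apply, sub_eq_zero] at hx
    exact hx.symm
  · rintro ⟨hc, hcm⟩
    refine ⟨c, ⟨hcm, ?_⟩, 0, ⟨Submodule.zero_mem _, ?_⟩, (add_zero c).symm⟩
    · intro j r _
      simp only [ZMod.val_zero, zero_mul, pow_zero, one_mul]
      exact (Subring.mem_center_iff.mp hc r).symm
    · intro j r _
      simp
end

section
/- With notation as in the context: if T⁻ = ∅, then T_p = rad β̃ = rad β = rad β⁺; if T⁻ ≠ ∅, then T_p ∩ T⁺ = (rad β⁺) ∖ (rad β) and T_p ∩ T⁻ = (rad β) ∩ T⁻. -/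
/-- The skew-symmetric bicharacter `β̃(t,s) = (−1)^{p(t)p(s)} β(t,s)`. -/
def btilde {F T : Type*} [Field F] [CommGroup T]
    (β : T → T → Fˣ) (p : T → ZMod 2) : T → T → Fˣ :=
  fun t s => (-1 : Fˣ) ^ ((p t).val * (p s).val) * β t s

/-- The set of parity elements: those `t_p ∈ T` with `β̃(t_p, t) = (−1)^{p(t)}` for all `t`. -/
def paritySet {F T : Type*} [Field F] [CommGroup T]
    (β : T → T → Fˣ) (p : T → ZMod 2) : Set T :=
  {tp | ∀ t, btilde β p tp t = (-1 : Fˣ) ^ (p t).val}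

/-- The radical of `β⁺` (the restriction of `β` to `T⁺ × T⁺`), computed inside `T⁺`. -/
def radPlus {F T : Type*} [Field F] [CommGroup T]
    (β : T → T → Fˣ) (p : T → ZMod 2) : Set T :=
  {t | p t = 0 ∧ ∀ s, p s = 0 → β t s = 1}

/-- If `T⁻ = ∅`, then `T_p = rad β̃ = rad β = rad β⁺`; if `T⁻ ≠ ∅`,
then `T_p ∩ T⁺ = (rad β⁺) ∖ (rad β)` and `T_p ∩ T⁻ = (rad β) ∩ T⁻`. -/
theorem stmt_8 {F T : Type*} [Field F] (h2 : (2 : F) ≠ 0) [CommGroup T]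
    (β : T → T → Fˣ)
    (hβ1 : ∀ t s s', β t (s * s') = β t s * β t s')
    (hβ2 : ∀ t t' s, β (t * t') s = β t s * β t' s)
    (halt : ∀ t, β t t = 1)
    (p : T → ZMod 2) (hp : ∀ a b, p (a * b) = p a + p b) :
    ((∀ t, p t = 0) →
      paritySet β p = {t : T | ∀ s, btilde β p t s = 1} ∧
      {t : T | ∀ s, btilde β p t s = 1} = {t : T | ∀ s, β t s = 1} ∧
      {t : T | ∀ s, β t s = 1} = radPlus β p) ∧
    ((∃ t, p t = 1) →
      paritySet β p ∩ {t : T | p t = 0} = radPlus β p \ {t : T | ∀ s, β t s = 1} ∧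
      paritySet β p ∩ {t : T | p t = 1} = {t : T | ∀ s, β t s = 1} ∩ {t : T | p t = 1}) := by
  have hneg : (-1 : Fˣ) ≠ 1 := by
    intro h
    apply h2
    have := congrArg Units.val h
    push_cast at this
    linear_combination -this
  have hsq : ∀ u : Fˣ, u * u = 1 → u = 1 ∨ u = -1 := by
    intro u hu
    have : (u : F) * (u : F) = 1 := by have := congrArg Units.val hu; push_cast at this; exact this
    rcases mul_self_eq_one_iff.1 this with h | h
    · left; exact Units.ext h
    · right; exact Units.ext (by push_cast; exact h)
  constructor
  · intro hall
    refine ⟨?_, ?_, ?_⟩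
    · ext t; simp [paritySet, btilde, hall]
    · ext t; simp [btilde, hall]
    · ext t; simp [radPlus, hall]
  · rintro ⟨t1, ht1⟩
    constructor
    · ext tp
      simp only [Set.mem_inter_iff, Set.mem_setOf_eq, Set.mem_diff, paritySet, radPlus,
        btilde]
      constructor
      · rintro ⟨hpar, hpt⟩
        refine ⟨⟨hpt, fun s hs => ?_⟩, fun hall => ?_⟩
        · have := hpar s
          rw [hpt, hs] at this
          simpa using this
        · have := hpar t1
          rw [hpt, ht1] at this
          simp only [ZMod.val_zero, ZMod.val_one, Nat.zero_mul, pow_zero, one_mul,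
            pow_one] at this
          exact hneg (by rw [← this, hall t1])
      · rintro ⟨⟨hpt, hplus⟩, hnr⟩
        push_neg at hnr
        obtain ⟨s0, hs0⟩ := hnr
        have hps0 : p s0 = 1 := by
          rcases (by decide : ∀ x : ZMod 2, x = 0 ∨ x = 1) (p s0) with h | h
          · exact absurd (hplus s0 h) hs0
          · exact h
        have hsq0 : β tp s0 * β tp s0 = 1 := by
          rw [← hβ1]
          exact hplus _ (by rw [hp, hps0]; decide)
        have hs0neg : β tp s0 = -1 := by
          rcases hsq _ hsq0 with h | h
          · exact absurd h hs0
          · exact h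
        refine ⟨fun t => ?_, hpt⟩
        rw [hpt]
        simp only [ZMod.val_zero, Nat.zero_mul, pow_zero, one_mul]
        rcases (by decide : ∀ x : ZMod 2, x = 0 ∨ x = 1) (p t) with h | h
        · rw [hplus t h, h]; simp
        · have hprod : β tp t * β tp s0 = 1 := by
            rw [← hβ1]
            exact hplus _ (by rw [hp, h, hps0]; decide)
          rw [hs0neg] at hprod
          have : β tp t = -1 := by
            have := mul_eq_one_iff_eq_inv.1 hprod
            simpa using this
          rw [this, h]
          simp [ZMod.val_one]
    · ext tp
      simp only [Set.mem_inter_iff, Set.mem_setOf_eq, paritySet, btilde]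
      constructor
      · rintro ⟨hpar, hpt⟩
        refine ⟨fun s => ?_, hpt⟩
        have := hpar s
        rw [hpt] at this
        simp only [ZMod.val_one, Nat.one_mul] at this
        exact mul_left_cancel (this.trans (mul_one _).symm)
      · rintro ⟨hrad, hpt⟩
        refine ⟨fun t => ?_, hpt⟩
        rw [hpt, hrad t]
        simp [ZMod.val_one]
end

section
/- With notation as in the context, assume moreover that T is finite. Then β̃ is nondegenerate if and only if T has exactly one parity element; in that case the unique parity element t_p satisfies t_p² = e. Furthermore: (1) if β is nondegenerate, then β̃ is nondegenerate, t_p ∈ T⁺, and rad β⁺ = ⟨t_p⟩; (2) if β is degenerate, then β̃ is nondegenerate if and only if β⁺ is nondegenerate, and in this case t_p ∈ T⁻ and rad β = ⟨t_p⟩. -/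
section Aux
variable {F T : Type*} [Field F] [CommGroup T]

lemma zmod2_cases (x : ZMod 2) : x = 0 ∨ x = 1 := by revert x; decide

lemma neg_one_ne_one' (h2 : (2:F) ≠ 0) : (-1 : Fˣ) ≠ 1 := by
  intro h
  apply h2
  have := congrArg (Units.val) h
  simp only [Units.val_neg, Units.val_one] at this
  linear_combination -this

lemma units_sq (c : Fˣ) (h : c * c = 1) : c = 1 ∨ c = -1 := by
  have h' : (c : F) * (c : F) = 1 := by
    have := congrArg (Units.val) h; simpa using this
  rcases mul_self_eq_one_iff.mp h' with h1 | h1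
  · left; ext; simpa using h1
  · right; ext; simpa using h1

lemma negpow3 (x y z : ZMod 2) :
    (-1:Fˣ)^((x+y).val * z.val) = (-1:Fˣ)^(x.val*z.val) * (-1:Fˣ)^(y.val*z.val) := by
  rcases zmod2_cases x with rfl|rfl <;> rcases zmod2_cases y with rfl|rfl <;>
    rcases zmod2_cases z with rfl|rfl <;>
      norm_num [show ((1:ZMod 2)+1) = 0 from rfl, show ((0:ZMod 2)+1) = 1 from rfl,
        show ((1:ZMod 2)+0) = 1 from rfl, show ((0:ZMod 2)+0) = 0 from rfl,
        show (0:ZMod 2).val = 0 from rfl, show (1:ZMod 2).val = 1 from rfl,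
        show ((2:ZMod 2)).val = 0 from rfl]

lemma negpow3r (x y z : ZMod 2) :
    (-1:Fˣ)^(x.val * (y+z).val) = (-1:Fˣ)^(x.val*y.val) * (-1:Fˣ)^(x.val*z.val) := by
  rcases zmod2_cases x with rfl|rfl <;> rcases zmod2_cases y with rfl|rfl <;>
    rcases zmod2_cases z with rfl|rfl <;>
      norm_num [show ((1:ZMod 2)+1) = 0 from rfl, show ((0:ZMod 2)+1) = 1 from rfl,
        show ((1:ZMod 2)+0) = 1 from rfl, show ((0:ZMod 2)+0) = 0 from rfl,
        show (0:ZMod 2).val = 0 from rfl, show (1:ZMod 2).val = 1 from rfl,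
        show ((2:ZMod 2)).val = 0 from rfl]

lemma negpow_addF (x y : ZMod 2) :
    (-1:F)^((x+y).val) = (-1:F)^(x.val) * (-1:F)^(y.val) := by
  rcases zmod2_cases x with rfl|rfl <;> rcases zmod2_cases y with rfl|rfl <;>
      norm_num [show ((1:ZMod 2)+1) = 0 from rfl, show ((0:ZMod 2)+1) = 1 from rfl,
        show ((1:ZMod 2)+0) = 1 from rfl, show ((0:ZMod 2)+0) = 0 from rfl,
        show (0:ZMod 2).val = 0 from rfl, show (1:ZMod 2).val = 1 from rfl,
        show ((2:ZMod 2)).val = 0 from rfl]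

lemma negpow_sq (x : ZMod 2) : (-1:Fˣ)^(x.val) * (-1:Fˣ)^(x.val) = 1 := by
  rcases zmod2_cases x with rfl|rfl <;>
    norm_num [show (0:ZMod 2).val = 0 from rfl, show (1:ZMod 2).val = 1 from rfl]

variable {β : T → T → Fˣ} {p : T → ZMod 2}

lemma p_one (hp : ∀ a b, p (a * b) = p a + p b) : p 1 = 0 := by
  have h := hp 1 1
  rw [mul_one] at h
  exact left_eq_add.mp h

lemma p_inv (hp : ∀ a b, p (a * b) = p a + p b) (t : T) : p t⁻¹ = p t := by
  have h := hp t t⁻¹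
  rw [mul_inv_cancel, p_one hp] at h
  have h2 : p t⁻¹ = - p t := eq_neg_of_add_eq_zero_right h.symm
  rw [h2]
  rcases zmod2_cases (p t) with h3|h3 <;> rw [h3] <;> decide

lemma beta_one_left (hβ2 : ∀ t t' s, β (t * t') s = β t s * β t' s) (s : T) : β 1 s = 1 := by
  have h := hβ2 1 1 s
  rw [mul_one] at h
  exact left_eq_mul.mp h

lemma beta_one_right (hβ1 : ∀ t s s', β t (s * s') = β t s * β t s') (t : T) : β t 1 = 1 := by
  have h := hβ1 t 1 1
  rw [mul_one] at h
  exact left_eq_mul.mp h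

lemma beta_inv_left (hβ2 : ∀ t t' s, β (t * t') s = β t s * β t' s) (t s : T) :
    β t⁻¹ s = (β t s)⁻¹ := by
  have h := hβ2 t t⁻¹ s
  rw [mul_inv_cancel, beta_one_left hβ2] at h
  exact eq_inv_of_mul_eq_one_right h.symm

lemma beta_inv_right (hβ1 : ∀ t s s', β t (s * s') = β t s * β t s') (t s : T) :
    β t s⁻¹ = (β t s)⁻¹ := by
  have h := hβ1 t s s⁻¹
  rw [mul_inv_cancel, beta_one_right hβ1] at h
  exact eq_inv_of_mul_eq_one_right h.symm

lemma bt_mul_left (hβ2 : ∀ t t' s, β (t * t') s = β t s * β t' s)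
    (hp : ∀ a b, p (a * b) = p a + p b) (t t' s : T) :
    btilde β p (t * t') s = btilde β p t s * btilde β p t' s := by
  unfold btilde
  rw [hβ2, hp, negpow3, mul_mul_mul_comm]

lemma bt_mul_right (hβ1 : ∀ t s s', β t (s * s') = β t s * β t s')
    (hp : ∀ a b, p (a * b) = p a + p b) (t s s' : T) :
    btilde β p t (s * s') = btilde β p t s * btilde β p t s' := by
  unfold btilde
  rw [hβ1, hp, negpow3r, mul_mul_mul_comm]

lemma bt_one_left (hβ2 : ∀ t t' s, β (t * t') s = β t s * β t' s)
    (hp : ∀ a b, p (a * b) = p a + p b) (s : T) : btilde β p 1 s = 1 := by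
  unfold btilde
  rw [p_one hp, beta_one_left hβ2]
  norm_num [show (0:ZMod 2).val = 0 from rfl]

lemma bt_one_right (hβ1 : ∀ t s s', β t (s * s') = β t s * β t s')
    (hp : ∀ a b, p (a * b) = p a + p b) (t : T) : btilde β p t 1 = 1 := by
  unfold btilde
  rw [p_one hp, beta_one_right hβ1]
  norm_num [show (0:ZMod 2).val = 0 from rfl]

lemma bt_inv_left (hβ2 : ∀ t t' s, β (t * t') s = β t s * β t' s)
    (hp : ∀ a b, p (a * b) = p a + p b) (t s : T) :
    btilde β p t⁻¹ s = (btilde β p t s)⁻¹ := by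
  have h := bt_mul_left hβ2 hp t t⁻¹ s
  rw [mul_inv_cancel, bt_one_left hβ2 hp] at h
  exact eq_inv_of_mul_eq_one_right h.symm

lemma bt_left_zero {t : T} (hpt : p t = 0) (s : T) : btilde β p t s = β t s := by
  unfold btilde
  rw [hpt]
  norm_num [show (0:ZMod 2).val = 0 from rfl]

lemma bt_diag (halt : ∀ t, β t t = 1) (t : T) :
    btilde β p t t = (-1:Fˣ)^(p t).val := by
  unfold btilde
  rw [halt, mul_one]
  rcases zmod2_cases (p t) with h|h <;> rw [h] <;>
    norm_num [show (0:ZMod 2).val = 0 from rfl, show (1:ZMod 2).val = 1 from rfl]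

/-- Characterization of the radical of `β̃`. -/
lemma rad_tilde_iff (h2 : (2:F) ≠ 0) (halt : ∀ t, β t t = 1) (t : T) :
    (∀ s, btilde β p t s = 1) ↔ (p t = 0 ∧ ∀ s, β t s = 1) := by
  constructor
  · intro h
    have hd := h t
    rw [bt_diag halt] at hd
    have hpt : p t = 0 := by
      rcases zmod2_cases (p t) with h0|h1
      · exact h0
      · exfalso
        apply neg_one_ne_one' h2
        rw [h1] at hd
        simpa [show (1:ZMod 2).val = 1 from rfl] using hd
    refine ⟨hpt, fun s => ?_⟩
    have hs := h s
    rw [bt_left_zero hpt] at hs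
    exact hs
  · rintro ⟨hpt, h⟩ s
    rw [bt_left_zero hpt, h]

lemma rad_apply (hnd : {t : T | ∀ s, btilde β p t s = 1} = {1}) {x : T}
    (hx : ∀ s, btilde β p x s = 1) : x = 1 := by
  have h : x ∈ {t : T | ∀ s, btilde β p t s = 1} := hx
  rw [hnd, Set.mem_singleton_iff] at h
  exact h

lemma parity_unique (hβ2 : ∀ t t' s, β (t * t') s = β t s * β t' s)
    (hp : ∀ a b, p (a * b) = p a + p b)
    (hnd : {t : T | ∀ s, btilde β p t s = 1} = {1}) {a b : T}
    (ha : a ∈ paritySet β p) (hb : b ∈ paritySet β p) : a = b := by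
  have h : ∀ s, btilde β p (a * b⁻¹) s = 1 := by
    intro s
    rw [bt_mul_left hβ2 hp, bt_inv_left hβ2 hp, ha s, hb s, mul_inv_cancel]
  exact mul_inv_eq_one.mp (rad_apply hnd h)

/-- An element of `rad β⁺` on which `β` is not fully trivial is a parity element. -/
lemma parity_of_radplus (hβ1 : ∀ t s s', β t (s * s') = β t s * β t s')
    (hp : ∀ a b, p (a * b) = p a + p b) {t : T}
    (hp0 : p t = 0) (hplus : ∀ s, p s = 0 → β t s = 1)
    {s₀ : T} (hs₀ : β t s₀ ≠ 1) : t ∈ paritySet β p := by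
  have hps₀ : p s₀ = 1 := by
    rcases zmod2_cases (p s₀) with h|h
    · exact absurd (hplus s₀ h) hs₀
    · exact h
  have hc2 : β t s₀ * β t s₀ = 1 := by
    rw [← hβ1]
    apply hplus
    rw [hp, hps₀]
    decide
  have hc : β t s₀ = -1 := (units_sq _ hc2).resolve_left hs₀
  intro s
  rcases zmod2_cases (p s) with h|h
  · rw [bt_left_zero hp0, hplus s h, h]
    norm_num [show (0:ZMod 2).val = 0 from rfl]
  · have hval : β t s = β t s₀ := by
      have h1 : β t (s * s₀⁻¹) = 1 := by
        apply hplus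
        rw [hp, p_inv hp, hps₀, h]
        decide
      rw [hβ1, beta_inv_right hβ1] at h1
      exact inv_injective (eq_inv_of_mul_eq_one_right h1).symm
    rw [bt_left_zero hp0, hval, hc, h]
    norm_num [show (1:ZMod 2).val = 1 from rfl]

/-- The radical of `β` as a subgroup. -/
def radSubgroup (hβ1 : ∀ t s s', β t (s * s') = β t s * β t s')
    (hβ2 : ∀ t t' s, β (t * t') s = β t s * β t' s) : Subgroup T where
  carrier := {t : T | ∀ s, β t s = 1}
  one_mem' := fun s => beta_one_left hβ2 s
  mul_mem' := by
    intro a b ha hb s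
    rw [hβ2, ha s, hb s, mul_one]
  inv_mem' := by
    intro a ha s
    rw [beta_inv_left hβ2, ha s, inv_one]

/-- `rad β⁺` as a subgroup. -/
def radPlusSubgroup (hβ1 : ∀ t s s', β t (s * s') = β t s * β t s')
    (hβ2 : ∀ t t' s, β (t * t') s = β t s * β t' s)
    (hp : ∀ a b, p (a * b) = p a + p b) : Subgroup T where
  carrier := radPlus β p
  one_mem' := ⟨p_one hp, fun s _ => beta_one_left hβ2 s⟩
  mul_mem' := by
    rintro a b ⟨ha1, ha2⟩ ⟨hb1, hb2⟩
    refine ⟨by rw [hp, ha1, hb1, add_zero], fun s hs => ?_⟩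
    rw [hβ2, ha2 s hs, hb2 s hs, mul_one]
  inv_mem' := by
    rintro a ⟨ha1, ha2⟩
    refine ⟨by rw [p_inv hp]; exact ha1, fun s hs => ?_⟩
    rw [beta_inv_left hβ2, ha2 s hs, inv_one]

/-- Existence of a parity element when `β̃` is nondegenerate (uses Dedekind's
linear independence of characters and finiteness of `T`). -/
lemma exists_parity [Fintype T]
    (hβ1 : ∀ t s s', β t (s * s') = β t s * β t s')
    (hβ2 : ∀ t t' s, β (t * t') s = β t s * β t' s)
    (hp : ∀ a b, p (a * b) = p a + p b)
    (hnd : {t : T | ∀ s, btilde β p t s = 1} = {1}) :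
    ∃ tp, tp ∈ paritySet β p := by
  classical
  by_contra hno
  push_neg at hno
  set Φ : T → (T →* F) := fun t =>
    { toFun := fun s => (btilde β p t s : F)
      map_one' := by
        show (btilde β p t 1 : F) = 1
        rw [bt_one_right hβ1 hp, Units.val_one]
      map_mul' := fun a b => by
        show (btilde β p t (a * b) : F) = (btilde β p t a : F) * (btilde β p t b : F)
        rw [bt_mul_right hβ1 hp, Units.val_mul] } with hΦ
  set χ : T →* F :=
    { toFun := fun s => (-1:F)^(p s).val
      map_one' := by
        show (-1:F)^(p 1).val = 1
        rw [p_one hp]; norm_num [show (0:ZMod 2).val = 0 from rfl]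
      map_mul' := fun a b => by
        show (-1:F)^(p (a*b)).val = (-1:F)^(p a).val * (-1:F)^(p b).val
        rw [hp]; exact negpow_addF _ _ } with hχ
  have hΦapp : ∀ t s, Φ t s = (btilde β p t s : F) := fun t s => rfl
  have hχapp : ∀ s, χ s = (-1:F)^(p s).val := fun s => rfl
  have hΦinj : Function.Injective Φ := by
    intro a b hab
    have h1 : ∀ s, btilde β p a s = btilde β p b s := by
      intro s
      have := congrArg (fun f => f s) hab
      exact Units.ext this
    have h2 : ∀ s, btilde β p (a * b⁻¹) s = 1 := by
      intro s
      rw [bt_mul_left hβ2 hp, bt_inv_left hβ2 hp, h1 s, mul_inv_cancel]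
    exact mul_inv_eq_one.mp (rad_apply hnd h2)
  have hχnr : ∀ t, Φ t ≠ χ := by
    intro t h
    apply hno t
    intro s
    have h1 : (btilde β p t s : F) = (-1:F)^(p s).val := congrArg (fun f => f s) h
    apply Units.ext
    rw [h1]
    simp
  set g : Option T → (T →* F) := fun o => o.elim χ Φ with hg
  have hginj : Function.Injective g := by
    intro x y hxy
    match x, y with
    | none, none => rfl
    | none, some a => exact absurd hxy.symm (hχnr a)
    | some a, none => exact absurd hxy (hχnr a)
    | some a, some b => exact congrArg some (hΦinj hxy)
  have hli : LinearIndependent F ((fun f : T →* F => (f : T → F)) ∘ g) :=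
    (linearIndependent_monoidHom T F).comp g hginj
  have hcard := hli.fintype_card_le_finrank
  rw [Module.finrank_pi, Fintype.card_option] at hcard
  omega

end Aux

/-- For finite `T`: `β̃` is nondegenerate iff `T` has exactly one
parity element; in that case the unique parity element `t_p` satisfies `t_p² = e`.
Furthermore: (1) if `β` is nondegenerate, then `β̃` is nondegenerate, `t_p ∈ T⁺`, and
`rad β⁺ = ⟨t_p⟩`; (2) if `β` is degenerate, then `β̃` is nondegenerate iff `β⁺` is
nondegenerate, and in this case `t_p ∈ T⁻` and `rad β = ⟨t_p⟩`. -/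
theorem stmt_9 {F T : Type*} [Field F] (h2 : (2 : F) ≠ 0) [CommGroup T] [Fintype T]
    (β : T → T → Fˣ)
    (hβ1 : ∀ t s s', β t (s * s') = β t s * β t s')
    (hβ2 : ∀ t t' s, β (t * t') s = β t s * β t' s)
    (halt : ∀ t, β t t = 1)
    (p : T → ZMod 2) (hp : ∀ a b, p (a * b) = p a + p b) :
    (({t : T | ∀ s, btilde β p t s = 1} = {1}) ↔ (∃! tp : T, tp ∈ paritySet β p)) ∧
    (({t : T | ∀ s, btilde β p t s = 1} = {1}) → ∀ tp ∈ paritySet β p, tp ^ 2 = 1) ∧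
    (({t : T | ∀ s, β t s = 1} = {1}) →
      ({t : T | ∀ s, btilde β p t s = 1} = {1}) ∧
      ∀ tp ∈ paritySet β p, p tp = 0 ∧ radPlus β p = (Subgroup.zpowers tp : Set T)) ∧
    (({t : T | ∀ s, β t s = 1} ≠ {1}) →
      (({t : T | ∀ s, btilde β p t s = 1} = {1}) ↔ radPlus β p = {1}) ∧
      (({t : T | ∀ s, btilde β p t s = 1} = {1}) →
        ∀ tp ∈ paritySet β p, p tp = 1 ∧
          {t : T | ∀ s, β t s = 1} = (Subgroup.zpowers tp : Set T))) := by
  refine ⟨?_, ?_, ?_, ?_⟩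
  -- Part A
  · constructor
    · intro hnd
      obtain ⟨tp, htp⟩ := exists_parity hβ1 hβ2 hp hnd
      exact ⟨tp, htp, fun y hy => parity_unique hβ2 hp hnd hy htp⟩
    · rintro ⟨tp, htp, huniq⟩
      apply Set.eq_singleton_iff_unique_mem.mpr
      refine ⟨fun s => bt_one_left hβ2 hp s, ?_⟩
      intro x hx
      simp only [Set.mem_setOf_eq] at hx
      have hpar : tp * x ∈ paritySet β p := by
        intro s
        rw [bt_mul_left hβ2 hp, htp s, hx s, mul_one]
      have h1 := huniq (tp * x) hpar
      exact mul_eq_left.mp h1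
  -- Part B
  · intro hnd tp htp
    have h : ∀ s, btilde β p (tp ^ 2) s = 1 := by
      intro s
      rw [pow_two, bt_mul_left hβ2 hp, htp s]
      exact negpow_sq _
    exact rad_apply hnd h
  -- Part C
  · intro hβnd
    have hnd : {t : T | ∀ s, btilde β p t s = 1} = {1} := by
      apply Set.eq_singleton_iff_unique_mem.mpr
      refine ⟨fun s => bt_one_left hβ2 hp s, ?_⟩
      intro x hx
      simp only [Set.mem_setOf_eq] at hx
      obtain ⟨h0, hall⟩ := (rad_tilde_iff h2 halt x).mp hx
      have hmem : x ∈ {t : T | ∀ s, β t s = 1} := hall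
      rw [hβnd, Set.mem_singleton_iff] at hmem
      exact hmem
    refine ⟨hnd, fun tp htp => ?_⟩
    have hptp : p tp = 0 := by
      rcases zmod2_cases (p tp) with h|h
      · exact h
      · exfalso
        have hall : ∀ s, β tp s = 1 := by
          intro s
          have h1 := htp s
          unfold btilde at h1
          rw [h, show (1:ZMod 2).val = 1 from rfl, one_mul] at h1
          exact mul_left_cancel (h1.trans (mul_one _).symm)
        have hmem : tp ∈ {t : T | ∀ s, β t s = 1} := hall
        rw [hβnd, Set.mem_singleton_iff] at hmem
        rw [hmem, p_one hp] at h
        exact absurd h (by decide)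
    refine ⟨hptp, ?_⟩
    have htpplus : tp ∈ radPlus β p := by
      refine ⟨hptp, fun s hs => ?_⟩
      have h1 := htp s
      rw [bt_left_zero hptp, hs] at h1
      simpa using h1
    apply Set.Subset.antisymm
    · intro x hx
      obtain ⟨hx0, hxplus⟩ := hx
      by_cases hall : ∀ s, β x s = 1
      · have hmem : x ∈ {t : T | ∀ s, β t s = 1} := hall
        rw [hβnd, Set.mem_singleton_iff] at hmem
        rw [hmem]
        exact SetLike.mem_coe.mpr (Subgroup.one_mem _)
      · push_neg at hall
        obtain ⟨s₀, hs₀⟩ := hall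
        have hxp : x ∈ paritySet β p := parity_of_radplus hβ1 hp hx0 hxplus hs₀
        have hxtp : x = tp := parity_unique hβ2 hp hnd hxp htp
        rw [hxtp]
        exact SetLike.mem_coe.mpr (Subgroup.mem_zpowers tp)
    · have hle : Subgroup.zpowers tp ≤ radPlusSubgroup hβ1 hβ2 hp :=
        Subgroup.zpowers_le.mpr htpplus
      intro x hx
      exact hle hx
  -- Part D
  · intro hβdeg
    have key : ({t : T | ∀ s, btilde β p t s = 1} = {1}) →
        ∃ r, r ∈ paritySet β p ∧ p r = 1 ∧ (∀ s, β r s = 1) := by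
      intro hnd
      have hex : ∃ r, (∀ s, β r s = 1) ∧ r ≠ 1 := by
        by_contra hcon
        push_neg at hcon
        apply hβdeg
        apply Set.eq_singleton_iff_unique_mem.mpr
        exact ⟨fun s => beta_one_left hβ2 s, fun x hx => hcon x hx⟩
      obtain ⟨r, hrmem, hrne⟩ := hex
      have hpr : p r = 1 := by
        rcases zmod2_cases (p r) with h|h
        · exact absurd (rad_apply hnd ((rad_tilde_iff h2 halt r).mpr ⟨h, hrmem⟩)) hrne
        · exact h
      refine ⟨r, ?_, hpr, hrmem⟩
      intro s
      unfold btilde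
      rw [hrmem s, mul_one, hpr, show (1:ZMod 2).val = 1 from rfl, one_mul]
    constructor
    · constructor
      · intro hnd
        obtain ⟨r, hrpar, hpr, hrmem⟩ := key hnd
        apply Set.eq_singleton_iff_unique_mem.mpr
        refine ⟨⟨p_one hp, fun s _ => beta_one_left hβ2 s⟩, ?_⟩
        intro x hx
        obtain ⟨hx0, hxplus⟩ := hx
        by_cases hall : ∀ s, β x s = 1
        · exact rad_apply hnd ((rad_tilde_iff h2 halt x).mpr ⟨hx0, hall⟩)
        · push_neg at hall
          obtain ⟨s₀, hs₀⟩ := hall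
          have hxp := parity_of_radplus hβ1 hp hx0 hxplus hs₀
          have hxr := parity_unique hβ2 hp hnd hxp hrpar
          rw [hxr, hpr] at hx0
          exact absurd hx0 (by decide)
      · intro hplusnd
        apply Set.eq_singleton_iff_unique_mem.mpr
        refine ⟨fun s => bt_one_left hβ2 hp s, ?_⟩
        intro x hx
        simp only [Set.mem_setOf_eq] at hx
        obtain ⟨h0, hall⟩ := (rad_tilde_iff h2 halt x).mp hx
        have hmem : x ∈ radPlus β p := ⟨h0, fun s _ => hall s⟩
        rw [hplusnd, Set.mem_singleton_iff] at hmem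
        exact hmem
    · intro hnd tp htp
      obtain ⟨r, hrpar, hpr, hrmem⟩ := key hnd
      have htpr : tp = r := parity_unique hβ2 hp hnd htp hrpar
      refine ⟨by rw [htpr]; exact hpr, ?_⟩
      apply Set.Subset.antisymm
      · intro x hx
        simp only [Set.mem_setOf_eq] at hx
        rcases zmod2_cases (p x) with h|h
        · have hx1 : x = 1 := rad_apply hnd ((rad_tilde_iff h2 halt x).mpr ⟨h, hx⟩)
          rw [hx1]
          exact SetLike.mem_coe.mpr (Subgroup.one_mem _)
        · have hmem2 : ∀ s, β (x * tp⁻¹) s = 1 := by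
            intro s
            rw [hβ2, beta_inv_left hβ2, hx s, htpr, hrmem s, inv_one, mul_one]
          have hp0 : p (x * tp⁻¹) = 0 := by
            rw [hp, p_inv hp, h, htpr, hpr]
            decide
          have hx1 : x * tp⁻¹ = 1 :=
            rad_apply hnd ((rad_tilde_iff h2 halt _).mpr ⟨hp0, hmem2⟩)
          have hxtp : x = tp := mul_inv_eq_one.mp hx1
          rw [hxtp]
          exact SetLike.mem_coe.mpr (Subgroup.mem_zpowers tp)
      · have htpmem : tp ∈ radSubgroup hβ1 hβ2 := by
          show ∀ s, β tp s = 1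
          intro s
          rw [htpr]
          exact hrmem s
        have hle : Subgroup.zpowers tp ≤ radSubgroup hβ1 hβ2 :=
          Subgroup.zpowers_le.mpr htpmem
        intro x hx
        exact hle hx
end

section
/- With notation as in the context, assume moreover that T is finite. Then the set of parity elements is nonempty: there exists t_p ∈ T with β̃(t_p, t) = (−1)^{p(t)} for all t ∈ T. -/
open Multiplicative in
private lemma aux_card_cyclic_hom_le {F : Type*} [Field F] (n : ℕ) [NeZero n] :
    Nat.card (Multiplicative (ZMod n) →* Fˣ) ≤ n := by
  have hinj : Function.Injective (fun φ : Multiplicative (ZMod n) →* Fˣ =>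
      (⟨φ (ofAdd 1), by
        rw [mem_rootsOfUnity, ← map_pow, ← ofAdd_nsmul]
        simp⟩ : rootsOfUnity n F)) := by
    intro φ ψ h
    have h1 : φ (ofAdd 1) = ψ (ofAdd 1) := congrArg (fun z => (z : rootsOfUnity n F).1) h
    refine MonoidHom.ext fun x => ?_
    have hx : (ofAdd (1 : ZMod n))^(ZMod.val (toAdd x)) = x := by
      rw [← ofAdd_nsmul]; simp [ZMod.natCast_val]
    rw [← hx, map_pow, map_pow, h1]
  calc Nat.card (Multiplicative (ZMod n) →* Fˣ)
      ≤ Nat.card (rootsOfUnity n F) := Nat.card_le_card_of_injective _ hinj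
    _ ≤ n := card_rootsOfUnity F n

private lemma aux_card_hom_le {F G : Type*} [Field F] [CommGroup G] [Finite G] :
    Nat.card (G →* Fˣ) ≤ Nat.card G := by
  classical
  obtain ⟨ι, _, n, h1, ⟨e⟩⟩ := CommGroup.equiv_prod_multiplicative_zmod_of_finite G
  have hnz : ∀ i, NeZero (n i) := fun i => ⟨by have := h1 i; omega⟩
  let E : (G →* Fˣ) ≃* ∀ i, (Multiplicative (ZMod (n i)) →* Fˣ) :=
    (MulEquiv.monoidHomCongrLeft e).trans
      (Pi.monoidHomMulEquiv (fun i => Multiplicative (ZMod (n i))) Fˣ)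
  calc Nat.card (G →* Fˣ)
      = Nat.card (∀ i, (Multiplicative (ZMod (n i)) →* Fˣ)) := Nat.card_congr E.toEquiv
    _ = ∏ i, Nat.card (Multiplicative (ZMod (n i)) →* Fˣ) := Nat.card_pi
    _ ≤ ∏ i, n i := Finset.prod_le_prod' (fun i _ => aux_card_cyclic_hom_le (n i))
    _ = ∏ i, Nat.card (Multiplicative (ZMod (n i))) := by
        refine Finset.prod_congr rfl fun i _ => ?_
        simp [Nat.card_eq_fintype_card, ZMod.card]
    _ = Nat.card (∀ i, Multiplicative (ZMod (n i))) := Nat.card_pi.symm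
    _ = Nat.card G := (Nat.card_congr e.toEquiv).symm

private lemma aux_pow_cases {F : Type*} [Field F] : ∀ (a b c : ZMod 2),
    (-1:Fˣ) ^ ((a + b).val * c.val)
      = (-1) ^ (a.val * c.val) * (-1) ^ (b.val * c.val) := by
  intro a b c
  have h01 : ∀ x : ZMod 2, x = 0 ∨ x = 1 := by decide
  rcases h01 a with rfl | rfl <;> rcases h01 b with rfl | rfl <;> rcases h01 c with rfl | rfl <;>
    norm_num [show ZMod.val (2 : ZMod 2) = 0 from rfl, show (ZMod.val (1 : ZMod 2)) = 1 from rfl]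

private lemma aux_pow_cases' {F : Type*} [Field F] : ∀ (c a b : ZMod 2),
    (-1:Fˣ) ^ (c.val * (a + b).val)
      = (-1) ^ (c.val * a.val) * (-1) ^ (c.val * b.val) := by
  intro c a b
  rw [mul_comm c.val, mul_comm c.val, mul_comm c.val]
  exact aux_pow_cases a b c

private lemma aux_pow_add {F : Type*} [Field F] : ∀ (a b : ZMod 2),
    (-1:Fˣ) ^ ((a + b).val) = (-1) ^ a.val * (-1) ^ b.val := by
  intro a b
  have := aux_pow_cases (F := F) a b 1
  simpa [show (ZMod.val (1 : ZMod 2)) = 1 from rfl] using this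

/-- For finite `T`, an alternating bicharacter `β` on `T` with
values in `Fˣ` (`char F ≠ 2`) and a homomorphism `p : T → ℤ/2`, the set of parity
elements is nonempty: there exists `t_p ∈ T` with `β̃(t_p, t) = (−1)^{p(t)}`
for all `t ∈ T`. -/
theorem stmt_10 {F T : Type*} [Field F] (h2 : (2 : F) ≠ 0) [CommGroup T] [Fintype T]
    (β : T → T → Fˣ)
    (hβ1 : ∀ t s s', β t (s * s') = β t s * β t s')
    (hβ2 : ∀ t t' s, β (t * t') s = β t s * β t' s)
    (halt : ∀ t, β t t = 1)
    (p : T → ZMod 2) (hp : ∀ a b, p (a * b) = p a + p b) :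
    ∃ tp : T, ∀ t, btilde β p tp t = (-1 : Fˣ) ^ (p t).val := by
  classical
  -- skew symmetry of β
  have hskew : ∀ t s, β t s * β s t = 1 := by
    intro t s
    have h := halt (t * s)
    rw [hβ2, hβ1, hβ1, halt t, halt s, one_mul, mul_one] at h
    exact h
  -- multiplicativity of btilde in each slot
  have key2 : ∀ t s s', btilde β p t (s * s') = btilde β p t s * btilde β p t s' := by
    intro t s s'
    unfold btilde
    rw [hp, hβ1, aux_pow_cases']
    exact mul_mul_mul_comm _ _ _ _
  have key1 : ∀ t t' s, btilde β p (t * t') s = btilde β p t s * btilde β p t' s := by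
    intro t t' s
    unfold btilde
    rw [hp, hβ2, aux_pow_cases]
    exact mul_mul_mul_comm _ _ _ _
  -- skew symmetry of btilde
  have hbskew : ∀ t s, btilde β p t s * btilde β p s t = 1 := by
    intro t s
    unfold btilde
    rw [mul_mul_mul_comm, ← pow_add, mul_comm ((p s).val), ← two_mul, pow_mul, neg_one_sq,
      one_pow, one_mul]
    exact hskew t s
  -- the map Φ : T →* (T →* Fˣ)
  set Φ : T →* (T →* Fˣ) := MonoidHom.mk'
    (fun t => MonoidHom.mk' (fun s => btilde β p t s) (key2 t))
    (fun t t' => MonoidHom.ext fun s => key1 t t' s) with hΦ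
  have hΦapp : ∀ t s, Φ t s = btilde β p t s := fun _ _ => rfl
  set K : Subgroup T := Φ.ker with hK
  have hvanish : ∀ t, ∀ k ∈ K, Φ t k = 1 := by
    intro t k hk
    have h1 : Φ k t = 1 := by
      rw [MonoidHom.mem_ker] at hk
      rw [hk]; rfl
    have h := hbskew t k
    rw [← hΦapp, ← hΦapp, h1, mul_one] at h
    exact h
  -- lift to the quotient in the second variable
  set Φ₂ : T →* ((T ⧸ K) →* Fˣ) := MonoidHom.mk'
    (fun t => QuotientGroup.lift K (Φ t) (hvanish t))
    (fun t t' => MonoidHom.ext fun q => by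
      induction q using QuotientGroup.induction_on with
      | _ s => simp [key1, hΦapp]; rfl) with hΦ₂
  have hΦ₂app : ∀ t s : T, Φ₂ t ((s : T ⧸ K)) = btilde β p t s := fun _ _ => rfl
  -- lift in the first variable
  set D : (T ⧸ K) →* ((T ⧸ K) →* Fˣ) := QuotientGroup.lift K Φ₂
    (fun k hk => MonoidHom.ext fun q => by
      induction q using QuotientGroup.induction_on with
      | _ s =>
        rw [MonoidHom.mem_ker] at hk
        show Φ k s = _
        rw [hk]; rfl) with hD
  have hDapp : ∀ t s : T, D ((t : T ⧸ K)) ((s : T ⧸ K)) = btilde β p t s := fun _ _ => rfl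
  -- D is injective
  have hDinj : Function.Injective D := by
    rw [injective_iff_map_eq_one]
    intro q hq
    induction q using QuotientGroup.induction_on with
    | _ t =>
      rw [QuotientGroup.eq_one_iff, hK, MonoidHom.mem_ker]
      ext s
      have := congrArg (fun f : (T ⧸ K) →* Fˣ => f ((s : T ⧸ K))) hq
      simpa [hDapp, hΦapp] using this
  -- the character χ
  have hχmul : ∀ a b : T, (fun t => (-1 : Fˣ) ^ (p t).val) (a * b)
      = (fun t => (-1 : Fˣ) ^ (p t).val) a * (fun t => (-1 : Fˣ) ^ (p t).val) b := by
    intro a b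
    simp only [hp]
    exact aux_pow_add _ _
  set χ : T →* Fˣ := MonoidHom.mk' (fun t => (-1 : Fˣ) ^ (p t).val) hχmul with hχ
  have hsq : ∀ a : ZMod 2, a.val * a.val = a.val := by decide
  have hχvan : ∀ k ∈ K, χ k = 1 := by
    intro k hk
    have h1 : Φ k k = 1 := by rw [MonoidHom.mem_ker] at hk; rw [hk]; rfl
    have : btilde β p k k = 1 := h1
    unfold btilde at this
    rw [halt, mul_one, hsq] at this
    exact this
  set χ' : (T ⧸ K) →* Fˣ := QuotientGroup.lift K χ hχvan with hχ'
  -- counting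
  have hfinQ : Finite (T ⧸ K) := Quotient.finite _
  have hfinH : Finite ((T ⧸ K) →* Fˣ) := by
    haveI : NeZero (Nat.card (T ⧸ K)) := ⟨Nat.card_pos.ne'⟩
    have hinj : Function.Injective (fun (φ : (T ⧸ K) →* Fˣ) (q : T ⧸ K) =>
        (⟨φ q, by
          rw [mem_rootsOfUnity, ← map_pow, pow_card_eq_one', map_one]⟩ :
          rootsOfUnity (Nat.card (T ⧸ K)) F)) := by
      intro φ ψ h
      exact MonoidHom.ext fun q => Subtype.ext_iff.mp (congrFun h q)
    exact Finite.of_injective _ hinj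
  have hcard : Nat.card (T ⧸ K) = Nat.card ((T ⧸ K) →* Fˣ) :=
    le_antisymm (Nat.card_le_card_of_injective D hDinj) aux_card_hom_le
  have hDsurj : Function.Surjective D :=
    ((Nat.bijective_iff_injective_and_card D).mpr ⟨hDinj, hcard⟩).2
  obtain ⟨q, hq⟩ := hDsurj χ'
  induction q using QuotientGroup.induction_on with
  | _ tp =>
    refine ⟨tp, fun t => ?_⟩
    have := congrArg (fun f : (T ⧸ K) →* Fˣ => f ((t : T ⧸ K))) hq
    exact this
end

section
/- With D, T, p, the elements X_t, and β̃ as in the context: given any map η: T → Fˣ, let φ₀: D → D be the F-linear map determined by φ₀(X_t) = η(t)X_t for all t ∈ T. Then φ₀ is a super-anti-automorphism of D if and only if η(ab) = β̃(a,b)η(a)η(b) for all a, b ∈ T. Moreover, D admits a degree-preserving super-anti-automorphism if and only if β̃ takes only the values 1 and −1. -/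
namespace Stmt11

universe u v

section Root

variable (F : Type u) [Field F] [IsAlgClosed F]

noncomputable def rootNat : RootableBy Fˣ ℕ where
  root a n :=
    if h : n = 0 then 1
    else
      Units.mk0 (Classical.choose (IsAlgClosed.exists_pow_nat_eq (a : F) (Nat.pos_of_ne_zero h)))
        (by
          intro h0
          have hs := Classical.choose_spec
            (IsAlgClosed.exists_pow_nat_eq (a : F) (Nat.pos_of_ne_zero h))
          rw [h0, zero_pow h] at hs
          exact a.ne_zero hs.symm)
  root_zero a := dif_pos rfl
  root_cancel a hn := by
    rw [dif_neg hn]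
    apply Units.ext
    push_cast
    exact Classical.choose_spec (IsAlgClosed.exists_pow_nat_eq (a : F) (Nat.pos_of_ne_zero hn))

noncomputable def rootInt : RootableBy Fˣ ℤ :=
  @Group.rootableByIntOfRootableByNat Fˣ _ (rootNat F)

noncomputable def divInt : DivisibleBy (Additive Fˣ) ℤ where
  div a n := Additive.ofMul ((rootInt F).root (Additive.toMul a) n)
  div_zero a := by rw [(rootInt F).root_zero]; rfl
  div_cancel a hn := by
    have h := (rootInt F).root_cancel (Additive.toMul a) hn
    show (_ : Additive Fˣ) = a
    rw [← ofMul_zpow, h]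
    rfl

end Root

section Ext

variable {F : Type u} {T : Type v} [Field F] [AddCommGroup T]

structure Ext (F : Type u) (T : Type v) [Field F] : Type (max u v) where
  u : Fˣ
  t : T

variable (γ : T → T → Fˣ)

variable (hsym : ∀ a b, γ a b = γ b a) (hbil : ∀ a b c, γ (a + b) c = γ a c * γ b c)

include hbil in
lemma gamma_zero_left (c : T) : γ 0 c = 1 := by
  have h := hbil 0 0 c
  rw [add_zero] at h
  exact (left_eq_mul.mp h)

include hsym hbil in
lemma gamma_zero_right (c : T) : γ c 0 = 1 := by
  rw [hsym]; exact gamma_zero_left γ hbil c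

include hsym hbil in
lemma gamma_bil_right (a b c : T) : γ a (b + c) = γ a b * γ a c := by
  rw [hsym, hbil, hsym b a, hsym c a]

def extAdd (x y : Ext F T) : Ext F T := ⟨x.u * y.u * γ x.t y.t, x.t + y.t⟩

include hsym hbil in
lemma extAdd_assoc (x y z : Ext F T) :
    extAdd γ (extAdd γ x y) z = extAdd γ x (extAdd γ y z) := by
  unfold extAdd
  rw [Ext.mk.injEq]
  constructor
  · dsimp only
    rw [hbil, gamma_bil_right γ hsym hbil]
    simp only [mul_assoc, mul_left_comm, mul_comm]
  · exact add_assoc _ _ _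

include hbil in
lemma extAdd_zero_add (x : Ext F T) : extAdd γ (Ext.mk 1 0) x = x := by
  unfold extAdd
  dsimp only
  rw [gamma_zero_left γ hbil, one_mul, mul_one, zero_add]

omit hbil in
include hsym in
lemma extAdd_neg (x : Ext F T) :
    extAdd γ (Ext.mk (x.u⁻¹ * (γ x.t (-x.t))⁻¹) (-x.t)) x = Ext.mk 1 0 := by
  unfold extAdd
  rw [Ext.mk.injEq]
  refine ⟨?_, neg_add_cancel _⟩
  dsimp only
  rw [hsym (-x.t) x.t]
  rw [mul_right_comm (x.u⁻¹) ((γ x.t (-x.t))⁻¹) x.u, inv_mul_cancel, one_mul,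
    inv_mul_cancel]

include hsym in
lemma extAdd_comm (x y : Ext F T) : extAdd γ x y = extAdd γ y x := by
  unfold extAdd
  rw [Ext.mk.injEq]
  exact ⟨by rw [hsym, mul_comm x.u y.u], add_comm _ _⟩

include hsym hbil in
def extGroup : AddCommGroup (Ext F T) :=
  letI : Zero (Ext F T) := ⟨Ext.mk 1 0⟩
  letI : Add (Ext F T) := ⟨extAdd γ⟩
  letI : Neg (Ext F T) := ⟨fun x => Ext.mk (x.u⁻¹ * (γ x.t (-x.t))⁻¹) (-x.t)⟩
  { add := (· + ·)
    zero := 0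
    neg := (- ·)
    nsmul := nsmulRec
    zsmul := zsmulRec
    add_assoc := extAdd_assoc γ hsym hbil
    zero_add := extAdd_zero_add γ hbil
    add_zero := fun x => (extAdd_comm γ hsym x (Ext.mk 1 0)).trans (extAdd_zero_add γ hbil x)
    neg_add_cancel := fun x => extAdd_neg γ hsym x
    add_comm := extAdd_comm γ hsym }

variable [IsAlgClosed F]

include hsym hbil in
theorem exists_eta : ∃ η : T → Fˣ, ∀ a b, η (a + b) = γ a b * η a * η b := by
  letI G : AddCommGroup (Ext F T) := extGroup γ hsym hbil
  letI : DivisibleBy (Additive Fˣ) ℤ := divInt F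
  haveI hinj : Module.Injective ℤ (ULift.{v} (Additive Fˣ)) :=
    Module.ulift_injective_of_injective (M := Additive Fˣ) ℤ
      ((Module.Baer.of_divisible (Additive Fˣ)).injective)
  let f0 : ULift.{v} (Additive Fˣ) →+ Ext F T :=
  { toFun := fun a => ⟨Additive.toMul a.down, 0⟩
    map_zero' := rfl
    map_add' := by
      intro a b
      show Ext.mk (Additive.toMul (a.down + b.down)) 0
        = Ext.mk (Additive.toMul a.down * Additive.toMul b.down * γ 0 0) (0 + 0)
      rw [Ext.mk.injEq]
      refine ⟨?_, (zero_add _).symm⟩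
      rw [toMul_add, gamma_zero_left γ hbil, mul_one]
  }
  have finj : Function.Injective f0.toIntLinearMap := by
    intro a b hab
    have h1 := congrArg Ext.u hab
    ext1
    exact Additive.toMul.injective h1
  obtain ⟨h, hh⟩ := hinj.out f0.toIntLinearMap finj LinearMap.id
  have key : ∀ a b : T, (Additive.toMul (h ⟨1, a⟩).down : Fˣ)
      * Additive.toMul (h ⟨1, b⟩).down
      = γ a b * Additive.toMul (h ⟨1, a + b⟩).down := by
    intro a b
    have e1 : (⟨1, a⟩ : Ext F T) + ⟨1, b⟩
        = f0.toIntLinearMap (ULift.up (Additive.ofMul (γ a b))) + ⟨1, a + b⟩ := by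
      show (Ext.mk (1 * 1 * γ a b) (a + b) : Ext F T)
        = Ext.mk (γ a b * 1 * γ 0 (a + b)) (0 + (a + b))
      rw [Ext.mk.injEq]
      exact ⟨by rw [gamma_zero_left γ hbil, one_mul, one_mul, mul_one, mul_one],
        (zero_add _).symm⟩
    have e2 := congrArg h e1
    rw [map_add, map_add, hh] at e2
    simp only [LinearMap.id_coe, id_eq] at e2
    have e3 := congrArg (fun z : ULift.{v} (Additive Fˣ) => Additive.toMul z.down) e2
    simp only [show ∀ x y : ULift.{v} (Additive Fˣ), (x + y).down = x.down + y.down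
        from fun _ _ => rfl, toMul_add] at e3
    refine e3.trans ?_
    rw [toMul_ofMul]
  refine ⟨fun a => (Additive.toMul (h ⟨1, a⟩).down)⁻¹, fun a b => ?_⟩
  show (Additive.toMul (h ⟨1, a + b⟩).down : Fˣ)⁻¹
    = γ a b * (Additive.toMul (h ⟨1, a⟩).down)⁻¹ * (Additive.toMul (h ⟨1, b⟩).down)⁻¹
  have h2 : (Additive.toMul (h ⟨1, a + b⟩).down : Fˣ)
      = (γ a b)⁻¹ * ((Additive.toMul (h ⟨1, a⟩).down : Fˣ)
        * Additive.toMul (h ⟨1, b⟩).down) :=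
    eq_inv_mul_iff_mul_eq.mpr (key a b).symm
  rw [h2, mul_inv, inv_inv, mul_inv, ← mul_assoc]

end Ext

end Stmt11


open Stmt11 in


/-- Let `D` be a graded-division superalgebra over an algebraically
closed field `F` (`char F ≠ 2`) with one-dimensional homogeneous components `D_t`
spanned by `X_t`, supported on a finite abelian group `T` with parity homomorphism
`p : T → ℤ/2`, and let `β̃` be the skew-symmetric bicharacter defined by
`X_t X_s = (−1)^{p(t)p(s)} β̃(t,s) X_s X_t`. Given a map `η : T → Fˣ`, the `F`-linear
map `φ₀` determined by `φ₀(X_t) = η(t) X_t` is a super-anti-automorphism of `D` iff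
`η(ab) = β̃(a,b) η(a) η(b)` for all `a, b ∈ T`. Moreover, `D` admits a
degree-preserving super-anti-automorphism iff `β̃` takes only the values `±1`. -/
theorem stmt_11 {F T D : Type*} [Field F] [IsAlgClosed F] (h2 : (2 : F) ≠ 0)
    [AddCommGroup T] [Fintype T] [DecidableEq T]
    [Ring D] [Algebra F D]
    (𝒜 : T → Submodule F D) [GradedAlgebra 𝒜]
    (hdim : ∀ t, Module.finrank F (𝒜 t) = 1)
    (hdiv : ∀ t, ∀ d ∈ 𝒜 t, d ≠ 0 → IsUnit d)
    (p : T → ZMod 2) (hp : ∀ a b, p (a + b) = p a + p b)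
    (X : T → D) (hX : ∀ t, X t ∈ 𝒜 t) (hX0 : ∀ t, X t ≠ 0)
    (βt : T → T → Fˣ)
    (hβt : ∀ t s, X t * X s =
      ((((-1 : Fˣ) ^ ((p t).val * (p s).val) * βt t s : Fˣ) : F)) • (X s * X t))
    (η : T → Fˣ) (φ₀ : D →ₗ[F] D)
    (hφ₀ : ∀ t, φ₀ (X t) = ((η t : F)) • X t) :
    ((Function.Bijective φ₀ ∧
      (∀ i : ZMod 2, ∀ x ∈ (⨆ t ∈ {t : T | p t = i}, 𝒜 t),
        φ₀ x ∈ (⨆ t ∈ {t : T | p t = i}, 𝒜 t)) ∧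
      (∀ (i j : ZMod 2), ∀ x ∈ (⨆ t ∈ {t : T | p t = i}, 𝒜 t),
        ∀ y ∈ (⨆ t ∈ {t : T | p t = j}, 𝒜 t),
          φ₀ (x * y) = ((-1 : F) ^ (i.val * j.val)) • (φ₀ y * φ₀ x)))
      ↔ (∀ a b : T, η (a + b) = βt a b * η a * η b)) ∧
    ((∃ ψ : D →ₗ[F] D, Function.Bijective ψ ∧
        (∀ t : T, ∀ x ∈ 𝒜 t, ψ x ∈ 𝒜 t) ∧
        (∀ (i j : ZMod 2), ∀ x ∈ (⨆ t ∈ {t : T | p t = i}, 𝒜 t),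
          ∀ y ∈ (⨆ t ∈ {t : T | p t = j}, 𝒜 t),
            ψ (x * y) = ((-1 : F) ^ (i.val * j.val)) • (ψ y * ψ x)))
      ↔ (∀ t s : T, βt t s = 1 ∨ βt t s = -1)) := by
  
  classical
  haveI : Nontrivial D := nontrivial_of_ne (X 0) 0 (hX0 0)
  -- basic facts
  have hAX : ∀ t, ∀ d ∈ 𝒜 t, ∃ c : F, c • X t = d := by
    intro t d hd
    have h1 : (⟨X t, hX t⟩ : 𝒜 t) ≠ 0 := by
      intro h0
      exact hX0 t (congrArg Subtype.val h0)
    obtain ⟨c, hc⟩ := (finrank_eq_one_iff_of_nonzero' (⟨X t, hX t⟩ : 𝒜 t) h1).mp (hdim t) ⟨d, hd⟩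
    exact ⟨c, congrArg Subtype.val hc⟩
  have hunit : ∀ t, IsUnit (X t) := fun t => hdiv t (X t) (hX t) (hX0 t)
  have hXXne : ∀ a b : T, X a * X b ≠ 0 := fun a b => ((hunit a).mul (hunit b)).ne_zero
  have hsmul_ne : ∀ (c : F) (v : D), c ≠ 0 → v ≠ 0 → c • v ≠ 0 := by
    intro c v hc hv h0
    apply hv
    have h1 := congrArg (fun w => c⁻¹ • w) h0
    simpa [smul_smul, inv_mul_cancel₀ hc] using h1
  have hcancel : ∀ (c c' : F) (v : D), v ≠ 0 → c • v = c' • v → c = c' := by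
    intro c c' v hv h
    by_contra hne
    have h1 : (c - c') • v = 0 := by rw [sub_smul, h, sub_self]
    exact hsmul_ne (c - c') v (sub_ne_zero.mpr hne) hv h1
  have hmulmem : ∀ (a b : T) (d e : D), d ∈ 𝒜 a → e ∈ 𝒜 b → d * e ∈ 𝒜 (a + b) :=
    fun a b d e hd he => SetLike.mul_mem_graded hd he
  have hs2F : ∀ k : ℕ, ((-1 : F) ^ k) * ((-1 : F) ^ k) = 1 := fun k => by
    rw [← mul_pow]; norm_num
  have hs2U : ∀ k : ℕ, ((-1 : Fˣ) ^ k) * ((-1 : Fˣ) ^ k) = 1 := fun k => by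
    rw [← mul_pow]; norm_num
  have hcomm : ∀ (a b : T) (d e : D), d ∈ 𝒜 a → e ∈ 𝒜 b →
      d * e = ((((-1 : Fˣ) ^ ((p a).val * (p b).val) * βt a b : Fˣ) : F)) • (e * d) := by
    intro a b d e hd he
    obtain ⟨c1, hc1⟩ := hAX a d hd
    obtain ⟨c2, hc2⟩ := hAX b e he
    subst hc1; subst hc2
    rw [smul_mul_assoc, mul_smul_comm, hβt a b, smul_mul_assoc, mul_smul_comm,
      smul_smul, smul_smul, smul_smul, smul_smul]
    congr 1
    ring
  -- skew-symmetry
  have hKK : ∀ a b : T, (((-1 : Fˣ) ^ ((p a).val * (p b).val) * βt a b)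
      * ((-1 : Fˣ) ^ ((p b).val * (p a).val) * βt b a) : Fˣ) = 1 := by
    intro a b
    have e1 := hβt a b
    rw [hβt b a, smul_smul] at e1
    have e2 : ((((-1 : Fˣ) ^ ((p a).val * (p b).val) * βt a b : Fˣ) : F)
        * (((-1 : Fˣ) ^ ((p b).val * (p a).val) * βt b a : Fˣ) : F)) = 1 :=
      hcancel _ 1 _ (hXXne a b) (by rw [one_smul]; exact e1.symm)
    exact Units.ext (by rw [Units.val_mul, Units.val_one]; exact e2)
  have hskew : ∀ a b : T, βt a b * βt b a = 1 := by
    intro a b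
    have e := hKK a b
    rw [Nat.mul_comm (p b).val (p a).val, mul_mul_mul_comm, hs2U, one_mul] at e
    exact e
  -- sign bicharacter
  have hsign : ∀ x y z : ZMod 2, (-1 : Fˣ) ^ ((x + y).val * z.val)
      = (-1 : Fˣ) ^ (x.val * z.val) * (-1 : Fˣ) ^ (y.val * z.val) := by
    intro x y z
    have hm1 : (-1 : Fˣ) * (-1 : Fˣ) = 1 := by simp
    have h01 : ∀ w : ZMod 2, w = 0 ∨ w = 1 := by decide
    rcases h01 x with rfl | rfl <;> rcases h01 y with rfl | rfl <;> rcases h01 z with rfl | rfl <;>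
      norm_num [show ((2 : ZMod 2)).val = 0 from rfl, show ((1 : ZMod 2)).val = 1 from rfl,
        show ((0 : ZMod 2)).val = 0 from rfl, hm1]
  -- biadditivity of βt
  have hbadd : ∀ a b c : T, βt (a + b) c = βt a c * βt b c := by
    intro a b c
    have habm := hmulmem a b _ _ (hX a) (hX b)
    have e1 := hcomm (a + b) c (X a * X b) (X c) habm (hX c)
    have e2 : (X a * X b) * X c
        = (((((-1 : Fˣ) ^ ((p a).val * (p c).val) * βt a c)
            * ((-1 : Fˣ) ^ ((p b).val * (p c).val) * βt b c) : Fˣ)) : F)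
          • (X c * (X a * X b)) := by
      rw [mul_assoc, hβt b c, mul_smul_comm, ← mul_assoc, hβt a c, smul_mul_assoc,
        smul_smul, mul_assoc]
      congr 1
      push_cast
      ring
    have hne : X c * (X a * X b) ≠ 0 := by
      obtain ⟨d, hd⟩ := hAX (a + b) (X a * X b) habm
      have hdne : d ≠ 0 := fun h0 => hXXne a b (by rw [← hd, h0, zero_smul])
      rw [← hd, mul_smul_comm]
      exact hsmul_ne d _ hdne (hXXne c (a + b))
    have e3 := hcancel _ _ _ hne (e1.symm.trans e2)
    have e4 : ((-1 : Fˣ) ^ ((p (a + b)).val * (p c).val) * βt (a + b) c : Fˣ)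
        = ((-1 : Fˣ) ^ ((p a).val * (p c).val) * βt a c)
          * ((-1 : Fˣ) ^ ((p b).val * (p c).val) * βt b c) := Units.ext e3
    rw [hp a b, hsign (p a) (p b) (p c), mul_mul_mul_comm] at e4
    exact mul_left_cancel e4
  -- linear map construction
  have mkmap : ∀ μ : T → F, ∃ ψ : D →ₗ[F] D, ∀ t, ∀ d ∈ 𝒜 t, ψ d = μ t • d := by
    intro μ
    refine ⟨(DirectSum.toModule F T D (fun t => μ t • (𝒜 t).subtype)).comp
      (DirectSum.decomposeLinearEquiv 𝒜).toLinearMap, ?_⟩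
    intro t d hd
    have hdec : (DirectSum.decomposeLinearEquiv 𝒜).toLinearMap d
        = DirectSum.lof F T (fun t => 𝒜 t) t ⟨d, hd⟩ := by
      show (DirectSum.decomposeLinearEquiv 𝒜) d = _
      rw [DirectSum.decomposeLinearEquiv_apply, DirectSum.decompose_of_mem 𝒜 hd,
        DirectSum.lof_eq_of]
    rw [LinearMap.comp_apply, hdec, DirectSum.toModule_lof]
    rfl
  have ext_top : ∀ (f g : D →ₗ[F] D), (∀ t, ∀ d ∈ 𝒜 t, f d = g d) → f = g := by
    intro f g hfg
    ext x
    have hx : x ∈ ⨆ t, 𝒜 t := by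
      rw [(DirectSum.Decomposition.isInternal 𝒜).submodule_iSup_eq_top]
      exact Submodule.mem_top
    refine Submodule.iSup_induction 𝒜 (motive := fun x => f x = g x) hx hfg (by simp) ?_
    intro x y hx hy
    have hx' : f x = g x := hx
    have hy' : f y = g y := hy
    show f (x + y) = g (x + y)
    rw [map_add, map_add, hx', hy']
  -- bijectivity
  have hbij : ∀ (μ : T → Fˣ) (φ : D →ₗ[F] D), (∀ t, ∀ d ∈ 𝒜 t, φ d = (μ t : F) • d) →
      Function.Bijective φ := by
    intro μ φ hφ
    obtain ⟨ψ, hψ⟩ := mkmap (fun t => (((μ t)⁻¹ : Fˣ) : F))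
    have h1 : ∀ x, ψ (φ x) = x := by
      intro x
      have he := ext_top (ψ.comp φ) LinearMap.id ?_
      · exact DFunLike.congr_fun he x
      intro t d hd
      rw [LinearMap.comp_apply, hφ t d hd, map_smul, hψ t d hd, smul_smul,
        ← Units.val_mul, mul_inv_cancel, Units.val_one, one_smul, LinearMap.id_apply]
    have h2 : ∀ x, φ (ψ x) = x := by
      intro x
      have he := ext_top (φ.comp ψ) LinearMap.id ?_
      · exact DFunLike.congr_fun he x
      intro t d hd
      rw [LinearMap.comp_apply, hψ t d hd, hφ t _ (Submodule.smul_mem _ _ hd), smul_smul,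
        ← Units.val_mul, mul_inv_cancel, Units.val_one, one_smul, LinearMap.id_apply]
    exact ⟨Function.LeftInverse.injective h1, Function.RightInverse.surjective h2⟩
  -- membership helper
  have hmemS : ∀ (i : ZMod 2) (t : T), p t = i →
      𝒜 t ≤ ⨆ t' ∈ {t' : T | p t' = i}, 𝒜 t' := by
    intro i t ht
    exact le_iSup₂ (f := fun t' (_ : t' ∈ {t' : T | p t' = i}) => 𝒜 t') t ht
  -- induction principle
  have hSind : ∀ (i : ZMod 2) (C : D → Prop), (∀ t, p t = i → ∀ d ∈ 𝒜 t, C d) → C 0 →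
      (∀ x y, C x → C y → C (x + y)) →
      ∀ x ∈ (⨆ t ∈ {t : T | p t = i}, 𝒜 t), C x := by
    intro i C hmem h0 hadd x hx
    rw [← iSup_subtype'' {t : T | p t = i} 𝒜] at hx
    exact Submodule.iSup_induction (fun t : {t' : T | p t' = i} => 𝒜 t) (motive := C) hx
      (fun t d hd => hmem t t.2 d hd) h0 hadd
  -- reverse multiplicativity
  have hrev : ∀ (φ : D →ₗ[F] D) (μ : T → Fˣ), (∀ t, ∀ d ∈ 𝒜 t, φ d = (μ t : F) • d) →
      (∀ a b, μ (a + b) = βt a b * μ a * μ b) →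
      ∀ (i j : ZMod 2), ∀ x ∈ (⨆ t ∈ {t : T | p t = i}, 𝒜 t),
        ∀ y ∈ (⨆ t ∈ {t : T | p t = j}, 𝒜 t),
          φ (x * y) = ((-1 : F) ^ (i.val * j.val)) • (φ y * φ x) := by
    intro φ μ hφ H i j x hx
    refine hSind i (fun x => ∀ y ∈ (⨆ t ∈ {t : T | p t = j}, 𝒜 t),
      φ (x * y) = ((-1 : F) ^ (i.val * j.val)) • (φ y * φ x)) ?_ ?_ ?_ x hx
    · intro a ha d hd y hy
      refine hSind j (fun y => φ (d * y) = ((-1 : F) ^ (i.val * j.val)) • (φ y * φ d))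
        ?_ ?_ ?_ y hy
      · intro b hb e he
        rw [hφ _ _ (hmulmem a b d e hd he), hφ a d hd, hφ b e he,
          smul_mul_assoc, mul_smul_comm, hcomm b a e d he hd,
          smul_smul, smul_smul, smul_smul]
        congr 1
        have hH := congrArg (Units.val) (H b a)
        rw [add_comm b a] at hH
        push_cast at hH ⊢
        rw [hH, ha, hb, Nat.mul_comm j.val i.val]
        linear_combination (-((βt b a : F) * (μ b : F) * (μ a : F))) * hs2F (i.val * j.val)
      · simp
      · intro y1 y2 hy1 hy2
        rw [mul_add, map_add, hy1, hy2, map_add, add_mul, smul_add]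
    · intro y hy
      simp
    · intro x1 x2 h1 h2 y hy
      rw [add_mul, map_add, h1 y hy, h2 y hy, map_add, mul_add, smul_add]
  -- forward: extract the relation
  have hfwd : ∀ (φ : D →ₗ[F] D) (μ : T → Fˣ), (∀ t, ∀ d ∈ 𝒜 t, φ d = (μ t : F) • d) →
      (∀ (i j : ZMod 2), ∀ x ∈ (⨆ t ∈ {t : T | p t = i}, 𝒜 t),
        ∀ y ∈ (⨆ t ∈ {t : T | p t = j}, 𝒜 t),
          φ (x * y) = ((-1 : F) ^ (i.val * j.val)) • (φ y * φ x)) →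
      ∀ a b, μ (a + b) = βt a b * μ a * μ b := by
    intro φ μ hφ hm a b
    have h1 := hm (p b) (p a) (X b) (hmemS (p b) b rfl (hX b)) (X a)
      (hmemS (p a) a rfl (hX a))
    rw [hφ a (X a) (hX a), hφ b (X b) (hX b),
      hφ (b + a) (X b * X a) (hmulmem b a _ _ (hX b) (hX a)),
      smul_mul_assoc, mul_smul_comm, hβt a b, smul_smul, smul_smul, smul_smul] at h1
    have hsc := hcancel _ _ _ (hXXne b a) h1
    apply Units.ext
    rw [add_comm a b]
    rw [hsc]
    push_cast
    linear_combination ((βt a b : F) * (μ a : F) * (μ b : F)) * hs2F ((p b).val * (p a).val)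
  -- component form of φ₀
  have hphi' : ∀ t, ∀ d ∈ 𝒜 t, φ₀ d = (η t : F) • d := by
    intro t d hd
    obtain ⟨c, hc⟩ := hAX t d hd
    rw [← hc, map_smul, hφ₀, smul_smul, smul_smul, mul_comm]
  -- parity preservation
  have hpres : ∀ (φ : D →ₗ[F] D) (μ : T → Fˣ), (∀ t, ∀ d ∈ 𝒜 t, φ d = (μ t : F) • d) →
      ∀ i : ZMod 2, ∀ x ∈ (⨆ t ∈ {t : T | p t = i}, 𝒜 t),
        φ x ∈ (⨆ t ∈ {t : T | p t = i}, 𝒜 t) := by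
    intro φ μ hφ i x hx
    refine hSind i (fun x => φ x ∈ (⨆ t ∈ {t : T | p t = i}, 𝒜 t)) ?_ ?_ ?_ x hx
    · intro t ht d hd
      rw [hφ t d hd]
      exact hmemS i t ht (Submodule.smul_mem _ _ hd)
    · simp
    · intro x y hx hy
      rw [map_add]
      exact Submodule.add_mem _ hx hy
  constructor
  · constructor
    · rintro ⟨hb, hpar, hmul⟩ a b
      exact hfwd φ₀ η hphi' hmul a b
    · intro H
      exact ⟨hbij η φ₀ hphi', hpres φ₀ η hphi', hrev φ₀ η hphi' H⟩
  · constructor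
    · rintro ⟨ψ, hψbij, hψdeg, hψmul⟩ t s
      choose c0 hc0 using fun t => hAX t (ψ (X t)) (hψdeg t (X t) (hX t))
      have hc0ne : ∀ t, c0 t ≠ 0 := by
        intro t h0
        apply hX0 t
        apply hψbij.1
        rw [map_zero, ← hc0 t, h0, zero_smul]
      have hψ' : ∀ t, ∀ d ∈ 𝒜 t, ψ d = ((Units.mk0 (c0 t) (hc0ne t) : Fˣ) : F) • d := by
        intro t d hd
        obtain ⟨c, hc⟩ := hAX t d hd
        rw [← hc, map_smul, ← hc0 t, smul_smul, smul_smul, mul_comm]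
        rfl
      have H := hfwd ψ (fun t => Units.mk0 (c0 t) (hc0ne t)) hψ' hψmul
      set μ := fun t => Units.mk0 (c0 t) (hc0ne t) with hμ
      have hsymm : βt t s = βt s t := by
        have e1 := H t s
        have e2 := H s t
        rw [add_comm s t, e1] at e2
        have e3 : βt t s * (μ t * μ s) = βt s t * (μ t * μ s) := by
          rw [← mul_assoc, ← mul_assoc, e2]
          rw [mul_assoc, mul_comm (μ s) (μ t), ← mul_assoc]
        exact mul_right_cancel e3
      have hsq : βt t s * βt t s = 1 := by
        have := hskew t s
        rwa [← hsymm] at this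
      rcases mul_self_eq_one_iff.mp (by
        have := congrArg Units.val hsq
        push_cast at this
        exact this) with h | h
      · exact Or.inl (Units.ext (by rw [h, Units.val_one]))
      · exact Or.inr (Units.ext (by rw [h]; push_cast; ring))
    · intro hpm
      have hsymm : ∀ a b, βt a b = βt b a := by
        intro a b
        have h1 := hskew a b
        rcases hpm b a with h | h
        · rw [h, mul_one] at h1
          rw [h1, h]
        · rw [h] at h1 ⊢
          have : βt a b = -1 := by
            have := congrArg (fun u => u * (-1 : Fˣ)⁻¹) h1
            simpa [mul_assoc] using this
          rw [this]
      obtain ⟨η', hη'⟩ := exists_eta βt hsymm hbadd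
      obtain ⟨ψ, hψ⟩ := mkmap (fun t => ((η' t : Fˣ) : F))
      exact ⟨ψ, hbij η' ψ hψ, fun t x hx => by
        rw [hψ t x hx]; exact Submodule.smul_mem _ _ hx, hrev ψ η' hψ hη'⟩
end

section
/- Let F be a field with char F ≠ 2, let T be a finite elementary abelian 2-group, and let β: T × T → Fˣ be a nondegenerate alternating bicharacter. If η, η': T → Fˣ both satisfy η(ab) = β(a,b)η(a)η(b) and η'(ab) = β(a,b)η'(a)η'(b) for all a, b ∈ T, then there exists t ∈ T such that η'(s) = β(t,s)η(s) for all s ∈ T. In other words, all such maps η form a single equivalence class under twisting by the characters β(t,·). -/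
/-- Sum of a nontrivial `Fˣ`-valued character over a finite group is zero. -/
lemma sum_char_eq_zero {F T : Type*} [Field F] [CommGroup T] [Fintype T]
    (ψ : T → Fˣ) (hmul : ∀ a b, ψ (a * b) = ψ a * ψ b)
    (hnt : ∃ s, ψ s ≠ 1) : ∑ t : T, (ψ t : F) = 0 := by
  obtain ⟨s₀, hs₀⟩ := hnt
  have key : (ψ s₀ : F) * ∑ t : T, (ψ t : F) = ∑ t : T, (ψ t : F) := by
    rw [Finset.mul_sum]
    calc ∑ t : T, (ψ s₀ : F) * (ψ t : F)
        = ∑ t : T, ((ψ (s₀ * t) : F)) := by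
          refine Finset.sum_congr rfl fun t _ => ?_
          rw [hmul]; push_cast; ring
      _ = ∑ t : T, (ψ t : F) :=
          Fintype.sum_equiv (Equiv.mulLeft s₀) _ _ (fun t => rfl)
  have h1 : ((ψ s₀ : F) - 1) * ∑ t : T, (ψ t : F) = 0 := by
    rw [sub_mul, one_mul, key, sub_self]
  rcases mul_eq_zero.mp h1 with h | h
  · exfalso
    apply hs₀
    ext
    have := sub_eq_zero.mp h
    simpa using this
  · exact h

/-- Let `F` be a field with `char F ≠ 2`, `T` a finite elementary
abelian `2`-group, and `β : T × T → Fˣ` a nondegenerate alternating bicharacter.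
If `η, η' : T → Fˣ` both satisfy `η(ab) = β(a,b) η(a) η(b)`, then there exists `t ∈ T`
such that `η'(s) = β(t,s) η(s)` for all `s ∈ T`. -/
theorem stmt_13 {F T : Type*} [Field F] (h2 : (2 : F) ≠ 0) [CommGroup T] [Fintype T]
    (helem : ∀ t : T, t ^ 2 = 1)
    (β : T → T → Fˣ)
    (hβ1 : ∀ t s s', β t (s * s') = β t s * β t s')
    (hβ2 : ∀ t t' s, β (t * t') s = β t s * β t' s)
    (halt : ∀ t, β t t = 1)
    (hnondeg : ∀ t : T, t ≠ 1 → ∃ s, β t s ≠ 1)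
    (η η' : T → Fˣ)
    (hη : ∀ a b, η (a * b) = β a b * η a * η b)
    (hη' : ∀ a b, η' (a * b) = β a b * η' a * η' b) :
    ∃ t : T, ∀ s, η' s = β t s * η s := by
  classical
  have cancel : ∀ x y : Fˣ, x = x * y → y = 1 := fun x y h =>
    mul_left_cancel (show x * y = x * 1 by rw [mul_one, ← h])
  -- basic facts about β
  have hβt1 : ∀ t, β t 1 = 1 := fun t =>
    cancel (β t 1) (β t 1) (by rw [← hβ1, one_mul])
  have hβ1s : ∀ s, β 1 s = 1 := fun s =>
    cancel (β 1 s) (β 1 s) (by rw [← hβ2, one_mul])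
  -- β t s has order dividing 2
  have hβsq : ∀ t s, β t s * β t s = 1 := by
    intro t s
    have := hβ1 t s s
    rw [show s * s = 1 from by rw [← pow_two]; exact helem s, hβt1] at this
    exact this.symm
  have hβinv : ∀ t s, (β t s)⁻¹ = β t s := fun t s =>
    inv_eq_of_mul_eq_one_right (hβsq t s)
  -- β is symmetric
  have hβsymm : ∀ t s, β t s = β s t := by
    intro t s
    have h : β t s * β s t = 1 := by
      have h := halt (t * s)
      rwa [hβ2, hβ1, hβ1, halt, halt, one_mul, mul_one] at h
    calc β t s = β t s * (β t s * β s t) := by rw [h, mul_one]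
      _ = (β t s * β t s) * β s t := (mul_assoc _ _ _).symm
      _ = β s t := by rw [hβsq, one_mul]
  -- η 1 = 1, η' 1 = 1
  have hη1 : η 1 = 1 := by
    have h := hη 1 1
    rw [one_mul, hβ1s, one_mul] at h
    exact cancel _ _ h
  have hη'1 : η' 1 = 1 := by
    have h := hη' 1 1
    rw [one_mul, hβ1s, one_mul] at h
    exact cancel _ _ h
  -- the ratio character
  set χ : T → Fˣ := fun s => η' s * (η s)⁻¹ with hχdef
  have hχmul : ∀ a b, χ (a * b) = χ a * χ b := by
    intro a b
    show η' (a * b) * (η (a * b))⁻¹ = (η' a * (η a)⁻¹) * (η' b * (η b)⁻¹)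
    rw [Units.ext_iff, hη, hη']
    have h3 : ((β a b : Fˣ) : F) ≠ 0 := Units.ne_zero _
    have h4 : ((η a : Fˣ) : F) ≠ 0 := Units.ne_zero _
    have h5 : ((η b : Fˣ) : F) ≠ 0 := Units.ne_zero _
    push_cast
    field_simp
  have hχ1 : χ 1 = 1 := by
    show η' 1 * (η 1)⁻¹ = 1
    rw [hη1, hη'1, inv_one, mul_one]
  -- |T| is a power of 2, hence nonzero in F
  have hp : IsPGroup 2 T := fun g => ⟨1, by simpa using helem g⟩
  obtain ⟨n, hn⟩ := IsPGroup.iff_card.mp hp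
  have hcard : (Fintype.card T : F) ≠ 0 := by
    rw [← Nat.card_eq_fintype_card, hn]; push_cast; exact pow_ne_zero n h2
  -- double sum argument
  by_contra hcon
  push_neg at hcon
  -- for every t there is s with χ s * β t s ≠ 1
  have hnt : ∀ t, ∃ s, χ s * β t s ≠ 1 := by
    intro t
    obtain ⟨s, hs⟩ := hcon t
    refine ⟨s, fun h => hs ?_⟩
    have h' : η' s * (η s)⁻¹ * β t s = 1 := h
    have h1 : η' s * (η s)⁻¹ = (β t s)⁻¹ := mul_eq_one_iff_eq_inv.mp h'
    have h2 : η' s = (β t s)⁻¹ * η s := mul_inv_eq_iff_eq_mul.mp h1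
    rwa [hβinv] at h2
  -- S computed one way: zero
  have hS0 : ∑ t : T, ∑ s : T, ((χ s * β t s : Fˣ) : F) = 0 := by
    refine Finset.sum_eq_zero fun t _ => ?_
    exact sum_char_eq_zero (fun s => χ s * β t s)
      (fun a b => by rw [hχmul, hβ1, mul_mul_mul_comm]) (hnt t)
  -- S computed the other way: card T
  have hzero : ∀ s : T, s ≠ 1 → ∑ t : T, ((χ s * β t s : Fˣ) : F) = 0 := by
    intro s hs
    have hfac : ∑ t : T, ((χ s * β t s : Fˣ) : F)
        = (χ s : F) * ∑ t : T, ((β t s : Fˣ) : F) := by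
      rw [Finset.mul_sum]
      refine Finset.sum_congr rfl fun t _ => ?_
      push_cast; ring
    rw [hfac]
    have hz : ∑ t : T, ((β t s : Fˣ) : F) = 0 := by
      refine sum_char_eq_zero (fun t => β t s)
        (fun a b => by rw [hβ2]) ?_
      obtain ⟨u, hu⟩ := hnondeg s hs
      exact ⟨u, by rw [hβsymm]; exact hu⟩
    rw [hz, mul_zero]
  have hS1 : ∑ t : T, ∑ s : T, ((χ s * β t s : Fˣ) : F) = (Fintype.card T : F) := by
    calc ∑ t : T, ∑ s : T, ((χ s * β t s : Fˣ) : F)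
        = ∑ s : T, ∑ t : T, ((χ s * β t s : Fˣ) : F) := Finset.sum_comm
      _ = ∑ t : T, ((χ (1 : T) * β t 1 : Fˣ) : F) :=
          Finset.sum_eq_single_of_mem 1 (Finset.mem_univ 1)
            (fun s _ hs => hzero s hs)
      _ = (Fintype.card T : F) := by simp [hχ1, hβt1]
  rw [hS0] at hS1
  exact hcard hS1.symm
end

section
/- With notation as in the context, assume T is finite and rad β̃ = {e, f} for some element f ≠ e (necessarily f² = e and f ∈ T⁺). Let η, η': T → Fˣ take values in {1, −1}, satisfy η(ab) = β̃(a,b)η(a)η(b) and η'(ab) = β̃(a,b)η'(a)η'(b) for all a, b ∈ T, and satisfy η(f) = η'(f) = −1. Let t_p and t_p' be parity elements with η(t_p) = 1 and η'(t_p') = 1. Then t_p = t_p' if and only if there exists t₀ ∈ T⁺ such that η'(s) = β̃(t₀, s)η(s) for all s ∈ T. -/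
open Module in
lemma aux_card (F Q : Type*) [Field F] [CommGroup Q] [Fintype Q] :
    Nat.card (Q →* Fˣ) ≤ Fintype.card Q ∧ Finite (Q →* Fˣ) := by
  have li := linearIndependent_monoidHom Q F
  have h1 : Cardinal.mk (Q →* F) ≤ (Module.finrank F (Q → F) : Cardinal) :=
    li.cardinalMk_le_finrank
  rw [Module.finrank_pi] at h1
  have hQF : Finite (Q →* F) :=
    Cardinal.lt_aleph0_iff_finite.mp (h1.trans_lt (Cardinal.nat_lt_aleph0 _))
  have hinj : Function.Injective (fun χ : Q →* Fˣ => (Units.coeHom F).comp χ) := by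
    intro a b h
    ext x
    exact DFunLike.congr_fun h x
  have hfin : Finite (Q →* Fˣ) := Finite.of_injective _ hinj
  refine ⟨(Nat.card_le_card_of_injective _ hinj).trans ?_, hfin⟩
  have := Cardinal.toNat_le_toNat h1 (Cardinal.nat_lt_aleph0 _)
  simpa [Nat.card] using this



/-- Assume `T` is finite and `rad β̃ = {e, f}` with `f ≠ e`. Let
`η, η' : T → Fˣ` take values in `{±1}`, satisfy `η(ab) = β̃(a,b) η(a) η(b)` (and likewise
for `η'`), and `η(f) = η'(f) = −1`. Let `t_p`, `t_p'` be parity elements with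
`η(t_p) = 1` and `η'(t_p') = 1`. Then `t_p = t_p'` iff there exists `t₀ ∈ T⁺` such that
`η'(s) = β̃(t₀, s) η(s)` for all `s ∈ T`. -/
theorem stmt_14 {F T : Type*} [Field F] (h2 : (2 : F) ≠ 0) [CommGroup T] [Fintype T]
    (β : T → T → Fˣ)
    (hβ1 : ∀ t s s', β t (s * s') = β t s * β t s')
    (hβ2 : ∀ t t' s, β (t * t') s = β t s * β t' s)
    (halt : ∀ t, β t t = 1)
    (p : T → ZMod 2) (hp : ∀ a b, p (a * b) = p a + p b)
    (f : T) (hf : f ≠ 1)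
    (hrad : {t : T | ∀ s, btilde β p t s = 1} = {1, f})
    (η η' : T → Fˣ)
    (hηval : ∀ t, η t = 1 ∨ η t = -1)
    (hη'val : ∀ t, η' t = 1 ∨ η' t = -1)
    (hη : ∀ a b, η (a * b) = btilde β p a b * η a * η b)
    (hη' : ∀ a b, η' (a * b) = btilde β p a b * η' a * η' b)
    (hηf : η f = -1) (hη'f : η' f = -1)
    (tp tp' : T)
    (htp : ∀ t, btilde β p tp t = (-1 : Fˣ) ^ (p t).val) (hηtp : η tp = 1)
    (htp' : ∀ t, btilde β p tp' t = (-1 : Fˣ) ^ (p t).val) (hη'tp' : η' tp' = 1) :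
    tp = tp' ↔ ∃ t₀ : T, p t₀ = 0 ∧ ∀ s, η' s = btilde β p t₀ s * η s := by
  classical
  have hneg : (-1 : Fˣ) ≠ 1 := by
    intro h
    apply h2
    have h' : ((-1 : Fˣ) : F) = ((1 : Fˣ) : F) := by rw [h]
    simp only [Units.val_neg, Units.val_one] at h'
    linear_combination -h'
  have hsq : (-1 : Fˣ) * (-1 : Fˣ) = 1 := by simp
  have npm : ∀ n : ℕ, ((-1 : Fˣ)) ^ n = (-1) ^ (n % 2) := by
    intro n
    conv_lhs => rw [← Nat.div_add_mod n 2]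
    rw [pow_add, pow_mul, pow_two, hsq, one_pow, one_mul]
  -- basic bicharacter facts
  have hskewβ : ∀ t s, β t s * β s t = 1 := by
    intro t s
    have h := halt (t * s)
    rw [hβ1, hβ2, hβ2, halt, halt] at h
    simpa [mul_comm] using h
  have hp1 : p 1 = 0 := by
    have h := hp 1 1
    rw [one_mul] at h
    linear_combination -h
  have hβone : ∀ s, β 1 s = 1 := by
    intro s
    have h := hβ2 1 1 s
    rw [one_mul] at h
    exact (left_eq_mul.mp h)
  have hexp : ∀ (x y : ZMod 2) (c : ℕ),
      ((-1 : Fˣ)) ^ ((x + y).val * c) = (-1) ^ (x.val * c) * (-1) ^ (y.val * c) := by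
    intro x y c
    rw [← pow_add, npm ((x + y).val * c), npm (x.val * c + y.val * c), ZMod.val_add]
    congr 1
    rw [← Nat.add_mul, Nat.mul_mod, Nat.mul_mod (x.val + y.val) c]
    simp [Nat.mod_mod_of_dvd]
  have hbt1 : ∀ t s s', btilde β p t (s * s') = btilde β p t s * btilde β p t s' := by
    intro t s s'
    unfold btilde
    calc (-1 : Fˣ) ^ ((p t).val * (p (s * s')).val) * β t (s * s')
        = ((-1) ^ ((p s).val * (p t).val) * (-1) ^ ((p s').val * (p t).val)) *
          (β t s * β t s') := by
          rw [hβ1, hp, Nat.mul_comm]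
          rw [hexp (p s) (p s') ((p t).val)]
      _ = _ := by rw [Nat.mul_comm (p s).val, Nat.mul_comm (p s').val]
                  exact mul_mul_mul_comm _ _ _ _
  have hbt2 : ∀ t t' s, btilde β p (t * t') s = btilde β p t s * btilde β p t' s := by
    intro t t' s
    unfold btilde
    calc (-1 : Fˣ) ^ ((p (t * t')).val * (p s).val) * β (t * t') s
        = ((-1) ^ ((p t).val * (p s).val) * (-1) ^ ((p t').val * (p s).val)) *
          (β t s * β t' s) := by rw [hβ2, hp, hexp (p t) (p t') ((p s).val)]
      _ = _ := mul_mul_mul_comm _ _ _ _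
  have hbtskew : ∀ t s, btilde β p t s * btilde β p s t = 1 := by
    intro t s
    unfold btilde
    calc (-1 : Fˣ) ^ ((p t).val * (p s).val) * β t s *
          ((-1) ^ ((p s).val * (p t).val) * β s t)
        = ((-1) ^ ((p t).val * (p s).val) * (-1) ^ ((p s).val * (p t).val)) *
          (β t s * β s t) := mul_mul_mul_comm _ _ _ _
      _ = 1 := by
          rw [Nat.mul_comm (p s).val, ← pow_add, ← two_mul, pow_mul, hskewβ]
          norm_num
  have hbt_one : ∀ s, btilde β p 1 s = 1 := by
    intro s
    unfold btilde
    rw [hp1, hβone]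
    simp
  have hmem : ∀ t, (∀ s, btilde β p t s = 1) ↔ (t = 1 ∨ t = f) := by
    intro t
    constructor
    · intro h
      have ht : t ∈ {t : T | ∀ s, btilde β p t s = 1} := h
      rw [hrad] at ht
      simpa using ht
    · rintro (rfl | h1)
      · exact hbt_one
      · rw [h1]
        intro s
        have hfm : f ∈ ({1, f} : Set T) := by simp
        rw [← hrad] at hfm
        exact hfm s
  have hbtf : ∀ s, btilde β p f s = 1 := (hmem f).mpr (Or.inr rfl)
  have hbtf' : ∀ t, btilde β p t f = 1 := by
    intro t
    have h := hbtskew t f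
    rw [hbtf, mul_one] at h
    exact h
  have hff : f * f = 1 := by
    have h : ∀ s, btilde β p (f * f) s = 1 := fun s => by rw [hbt2, hbtf, one_mul]
    rcases (hmem _).mp h with h1 | h1
    · exact h1
    · exact absurd (mul_right_cancel (h1.trans (one_mul f).symm)) hf
  have hbtinv : ∀ t s, btilde β p t⁻¹ s = (btilde β p t s)⁻¹ := by
    intro t s
    have h := hbt2 t t⁻¹ s
    rw [mul_inv_cancel, hbt_one] at h
    exact eq_inv_of_mul_eq_one_right h.symm
  have htpcase : tp' = tp ∨ tp' = tp * f := by
    have h : ∀ s, btilde β p (tp' * tp⁻¹) s = 1 := by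
      intro s
      rw [hbt2, hbtinv, htp, htp', mul_inv_cancel]
    rcases (hmem _).mp h with h1 | h1
    · left; exact mul_inv_eq_one.mp h1
    · right
      rw [mul_inv_eq_iff_eq_mul.mp h1, mul_comm]
  have hη1 : η 1 = 1 := by
    have h := hη 1 1
    rw [one_mul, hbt_one, one_mul] at h
    exact left_eq_mul.mp h
  have hη'1 : η' 1 = 1 := by
    have h := hη' 1 1
    rw [one_mul, hbt_one, one_mul] at h
    exact left_eq_mul.mp h
  have hηinv : ∀ s, (η s)⁻¹ = η s := by
    intro s
    rcases hηval s with h | h <;> rw [h]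
    · exact inv_one
    · exact inv_eq_of_mul_eq_one_right hsq
  -- μ as a monoid homomorphism
  set μ : T →* Fˣ := MonoidHom.mk' (fun s => η' s * (η s)⁻¹) (by
    intro a b
    show η' (a * b) * (η (a * b))⁻¹ = (η' a * (η a)⁻¹) * (η' b * (η b)⁻¹)
    rw [hη, hη', mul_inv, mul_inv]
    calc btilde β p a b * η' a * η' b * ((btilde β p a b)⁻¹ * (η a)⁻¹ * (η b)⁻¹)
        = (btilde β p a b * (btilde β p a b)⁻¹) *
          ((η' a * (η a)⁻¹) * (η' b * (η b)⁻¹)) := by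
          simp only [mul_assoc, mul_left_comm, mul_comm]
      _ = (η' a * (η a)⁻¹) * (η' b * (η b)⁻¹) := by rw [mul_inv_cancel, one_mul]) with hμdef
  have hμ : ∀ s, μ s = η' s * (η s)⁻¹ := fun s => rfl
  have hμf : μ f = 1 := by
    rw [hμ, hηf, hη'f]
    exact mul_inv_cancel _
  constructor
  · intro heq
    -- the homomorphism Φ : t ↦ β̃(t, ·)
    set Φ : T →* (T →* Fˣ) :=
      MonoidHom.mk' (fun t => MonoidHom.mk' (fun s => btilde β p t s) (hbt1 t))
        (by intro a b; exact MonoidHom.ext fun s => hbt2 a b s) with hΦdef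
    have hΦapp : ∀ t s, Φ t s = btilde β p t s := fun t s => rfl
    have hkermem : ∀ t, t ∈ MonoidHom.ker Φ ↔ (t = 1 ∨ t = f) := by
      intro t
      rw [MonoidHom.mem_ker]
      constructor
      · intro h
        exact (hmem t).mp fun s => DFunLike.congr_fun h s
      · intro h
        exact MonoidHom.ext fun s => (hmem t).mpr h s
    have hcker : Nat.card (MonoidHom.ker Φ) = 2 := by
      have hs : (MonoidHom.ker Φ : Set T) = {1, f} := by
        ext t
        simpa using hkermem t
      exact (Nat.card_congr (Equiv.setCongr hs)).trans
        (by rw [Nat.card_coe_set_eq, Set.ncard_pair (Ne.symm hf)])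
    have hcard1 : Nat.card (T ⧸ MonoidHom.ker Φ) * 2 = Nat.card T := by
      rw [← hcker]
      exact (Subgroup.card_eq_card_quotient_mul_card_subgroup _).symm
    have horder : orderOf f = 2 := orderOf_eq_prime (by rw [pow_two]; exact hff) hf
    have hcard2 : Nat.card (T ⧸ Subgroup.zpowers f) * 2 = Nat.card T := by
      rw [← horder, ← Nat.card_zpowers]
      exact (Subgroup.card_eq_card_quotient_mul_card_subgroup _).symm
    set S : Set (T →* Fˣ) := {χ | χ f = 1} with hSdef
    have hrangeS : Set.range ⇑Φ ⊆ S := by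
      rintro _ ⟨t, rfl⟩
      exact hbtf' t
    haveI := Fintype.ofFinite (T ⧸ Subgroup.zpowers f)
    obtain ⟨hcard3, hfin3⟩ := aux_card F (T ⧸ Subgroup.zpowers f)
    obtain ⟨_, hfinT⟩ := aux_card F T
    have hSle : Nat.card S ≤ Nat.card ((T ⧸ Subgroup.zpowers f) →* Fˣ) := by
      have hle : ∀ χ : S, Subgroup.zpowers f ≤ MonoidHom.ker (χ : T →* Fˣ) := by
        rintro ⟨χ, hχ⟩ x hx
        obtain ⟨n, rfl⟩ := Subgroup.mem_zpowers_iff.mp hx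
        rw [MonoidHom.mem_ker, map_zpow, hχ, one_zpow]
      apply Nat.card_le_card_of_injective
        (fun χ : S => QuotientGroup.lift _ (χ : T →* Fˣ) (hle χ))
      intro a b h
      apply Subtype.ext
      exact MonoidHom.ext fun t => by
        simpa using DFunLike.congr_fun h (QuotientGroup.mk t)
    have hQeq : Nat.card (T ⧸ Subgroup.zpowers f) = Nat.card (T ⧸ MonoidHom.ker Φ) :=
      Nat.eq_of_mul_eq_mul_right (by norm_num) (hcard2.trans hcard1.symm)
    have hrangecard : Nat.card (T ⧸ MonoidHom.ker Φ) = Nat.card (Set.range ⇑Φ) := by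
      rw [Nat.card_congr (QuotientGroup.quotientKerEquivRange Φ).toEquiv]
      exact Nat.card_congr (Equiv.setCongr (MonoidHom.coe_range Φ))
    have hchain : Nat.card S ≤ Nat.card (Set.range ⇑Φ) := by
      calc Nat.card S ≤ Nat.card ((T ⧸ Subgroup.zpowers f) →* Fˣ) := hSle
        _ ≤ Fintype.card (T ⧸ Subgroup.zpowers f) := hcard3
        _ = Nat.card (T ⧸ Subgroup.zpowers f) := (Nat.card_eq_fintype_card).symm
        _ = Nat.card (T ⧸ MonoidHom.ker Φ) := hQeq
        _ = Nat.card (Set.range ⇑Φ) := hrangecard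
    haveI := hfinT
    have hSfin : S.Finite := Set.toFinite S
    have hSeq : Set.range ⇑Φ = S := by
      apply Set.eq_of_subset_of_ncard_le hrangeS _ hSfin
      rwa [← Nat.card_coe_set_eq, ← Nat.card_coe_set_eq]
    have hμS : μ ∈ S := hμf
    rw [← hSeq] at hμS
    obtain ⟨t₀, ht₀⟩ := hμS
    have hbtμ : ∀ s, btilde β p t₀ s = η' s * (η s)⁻¹ := fun s => DFunLike.congr_fun ht₀ s
    refine ⟨t₀, ?_, ?_⟩
    · have h : btilde β p t₀ tp = 1 := by
        rw [hbtμ tp, hηtp, heq, hη'tp']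
        simp
      have h2' : btilde β p tp t₀ = 1 := by
        have hs := hbtskew t₀ tp
        rw [h, one_mul] at hs
        exact hs
      rw [htp t₀] at h2'
      by_contra hne
      have hv : (p t₀).val = 1 := by
        have h1 := ZMod.val_lt (p t₀)
        have h0 : (p t₀).val ≠ 0 := fun hz => hne (by rwa [← ZMod.val_eq_zero])
        omega
      rw [hv, pow_one] at h2'
      exact hneg h2'
    · intro s
      rw [hbtμ s, inv_mul_cancel_right]
  · rintro ⟨t₀, hpt0, ht0⟩
    have hη'tp : η' tp = 1 := by
      have hb : btilde β p t₀ tp = 1 := by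
        have hs := hbtskew t₀ tp
        rw [htp t₀, hpt0] at hs
        simpa using hs
      rw [ht0 tp, hb, one_mul, hηtp]
    rcases htpcase with h | h
    · exact h.symm
    · exfalso
      have hcontra : η' tp' = -1 := by
        rw [h, hη', hbtf', hη'tp, hη'f, one_mul, one_mul]
      rw [hη'tp'] at hcontra
      exact hneg hcontra.symm
end

section
/- With notation as in the context, assume: T is finite; p is surjective (so T⁻ ≠ ∅); T⁺ is an elementary abelian 2-group; rad β̃ = {e, f} for some f ≠ e; t² = f for every t ∈ T⁻; and t_p ∈ T⁺ is a parity element with t_p ≠ e. Let K be a subgroup of T⁺ such that T⁺ is the internal direct product of rad β⁺ and K (i.e., (rad β⁺) ∩ K = {e} and (rad β⁺)·K = T⁺). Then the set S = {t₁ ∈ T⁻ : β̃(t₁, k) = 1 for all k ∈ K} is a coset of rad β⁺: S is nonempty, and S = t₁·(rad β⁺) for any t₁ ∈ S. -/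
/-- If a function `ψ` is multiplicative on a subgroup `K` and not identically `1` there,
then the sum of its values (cast to the field) over `K` vanishes. -/
lemma aux_char_sum_zero {F T : Type*} [Field F] [CommGroup T]
    (K : Subgroup T) [Fintype K] (ψ : T → Fˣ)
    (hmul : ∀ a ∈ K, ∀ b ∈ K, ψ (a * b) = ψ a * ψ b)
    (a : T) (haK : a ∈ K) (ha : ψ a ≠ 1) :
    ∑ k : K, ((ψ k : F)) = 0 := by
  have key : ∑ k : K, (ψ ((⟨a, haK⟩ : K) * k : K) : F) = ∑ k : K, (ψ k : F) :=
    Fintype.sum_equiv (Equiv.mulLeft (⟨a, haK⟩ : K)) _ _ (fun k => rfl)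
  have key2 : (ψ a : F) * ∑ k : K, (ψ k : F) = ∑ k : K, (ψ k : F) := by
    rw [Finset.mul_sum]
    rw [← key]
    refine Finset.sum_congr rfl (fun k _ => ?_)
    have : ψ (a * (k : T)) = ψ a * ψ k := hmul a haK k k.2
    have hcoe : ((⟨a, haK⟩ : K) * k : K) = (⟨a * k, mul_mem haK k.2⟩ : K) := rfl
    rw [hcoe]
    simp only [this]
    push_cast
    ring
  by_contra hS
  have : (ψ a : F) = 1 :=
    mul_right_cancel₀ hS (key2.trans (one_mul _).symm)
  exact ha (Units.ext (by simpa using this))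

/-- Assume: `T` is finite; `p` is surjective; `T⁺` is an elementary
abelian `2`-group; `rad β̃ = {e, f}` with `f ≠ e`; `t² = f` for every `t ∈ T⁻`; and
`t_p ∈ T⁺` is a parity element with `t_p ≠ e`. Let `K ≤ T⁺` be a subgroup with
`T⁺ = (rad β⁺) × K` internally. Then `S = {t₁ ∈ T⁻ : β̃(t₁, k) = 1 for all k ∈ K}` is a
coset of `rad β⁺`: `S` is nonempty, and `S = t₁ · (rad β⁺)` for any `t₁ ∈ S`. -/
theorem stmt_15 {F T : Type*} [Field F] (h2 : (2 : F) ≠ 0) [CommGroup T] [Fintype T]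
    (β : T → T → Fˣ)
    (hβ1 : ∀ t s s', β t (s * s') = β t s * β t s')
    (hβ2 : ∀ t t' s, β (t * t') s = β t s * β t' s)
    (halt : ∀ t, β t t = 1)
    (p : T → ZMod 2) (hp : ∀ a b, p (a * b) = p a + p b)
    (hsurj : ∃ t, p t = 1)
    (helem : ∀ t, p t = 0 → t ^ 2 = 1)
    (f : T) (hf : f ≠ 1)
    (hrad : {t : T | ∀ s, btilde β p t s = 1} = {1, f})
    (hsq : ∀ t, p t = 1 → t ^ 2 = f)
    (tp : T) (htp_plus : p tp = 0) (htp_ne : tp ≠ 1)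
    (htp : ∀ t, btilde β p tp t = (-1 : Fˣ) ^ (p t).val)
    (K : Subgroup T) (hK : ∀ k ∈ K, p k = 0)
    (hKrad : ∀ t ∈ radPlus β p, t ∈ K → t = 1)
    (hKgen : ∀ t, p t = 0 → ∃ r ∈ radPlus β p, ∃ k ∈ K, t = r * k) :
    ({t₁ : T | p t₁ = 1 ∧ ∀ k ∈ K, btilde β p t₁ k = 1}).Nonempty ∧
    ∀ t₁ ∈ {t₁ : T | p t₁ = 1 ∧ ∀ k ∈ K, btilde β p t₁ k = 1},
      {t₁' : T | p t₁' = 1 ∧ ∀ k ∈ K, btilde β p t₁' k = 1} =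
        (fun r => t₁ * r) '' radPlus β p := by
  classical
  -- basic consequences
  have hβ_oner : ∀ t, β t 1 = 1 := by
    intro t
    have h := hβ1 t 1 1
    rw [mul_one] at h
    exact (mul_eq_left.mp h.symm)
  have hβ_onel : ∀ s, β 1 s = 1 := by
    intro s
    have h := hβ2 1 1 s
    rw [mul_one] at h
    exact (mul_eq_left.mp h.symm)
  have hskew : ∀ t s, β s t = (β t s)⁻¹ := by
    intro t s
    have h := halt (t * s)
    rw [hβ2, hβ1, hβ1, halt, halt, one_mul, mul_one] at h
    exact eq_inv_of_mul_eq_one_left (by rw [mul_comm]; exact h)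
  have hinv_l : ∀ t s, β t⁻¹ s = (β t s)⁻¹ := by
    intro t s
    have h := hβ2 t t⁻¹ s
    rw [mul_inv_cancel, hβ_onel] at h
    exact eq_inv_of_mul_eq_one_left (by rw [mul_comm]; exact h.symm)
  have hp1 : p 1 = 0 := by
    have h := hp 1 1
    rw [mul_one] at h
    exact (left_eq_add.mp h)
  have hpinv : ∀ t, p t⁻¹ = p t := by
    intro t
    have h := hp t t⁻¹
    rw [mul_inv_cancel, hp1] at h
    have h' : p t⁻¹ = -(p t) := by linear_combination -h
    have hneg : ∀ x : ZMod 2, -x = x := by decide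
    rw [h', hneg]
  -- btilde equals β when second argument is even
  have hbt : ∀ t s, p s = 0 → btilde β p t s = β t s := by
    intro t s hs
    unfold btilde
    rw [hs]
    simp [ZMod.val_zero]
  -- nondegeneracy of β on K
  have hnd : ∀ k ∈ K, (∀ k' ∈ K, β k k' = 1) → k = 1 := by
    intro k hk hall
    refine hKrad k ⟨hK k hk, fun s hs => ?_⟩ hk
    obtain ⟨r, hr, k', hk', rfl⟩ := hKgen s hs
    rw [hβ1, hall k' hk', mul_one, hskew, hr.2 k (hK k hk), inv_one]
  -- the set S
  set S : Set T := {t₁ : T | p t₁ = 1 ∧ ∀ k ∈ K, btilde β p t₁ k = 1} with hS_def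
  -- Nonemptiness
  have hne : S.Nonempty := by
    obtain ⟨t₀, ht₀⟩ := hsurj
    -- the double sum
    have hcard : ∃ n : ℕ, Nat.card K = 2 ^ n := by
      have : IsPGroup 2 K := by
        intro g
        refine ⟨1, ?_⟩
        have : (g : T) ^ 2 = 1 := helem _ (hK _ g.2)
        ext
        push_cast
        simpa using this
      exact this.exists_card_eq
    obtain ⟨n, hn⟩ := hcard
    -- X = ∑_{k₀} ∑_k (β t₀ k)⁻¹ β k₀ k
    have hswap :
        (∑ k₀ : K, ∑ k : K, (((β t₀ k)⁻¹ * β k₀ k : Fˣ) : F)) =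
        ∑ k : K, ∑ k₀ : K, (((β t₀ k)⁻¹ * β k₀ k : Fˣ) : F) := Finset.sum_comm
    have hinner : ∀ k : K, (k : T) ≠ 1 →
        (∑ k₀ : K, (((β t₀ k)⁻¹ * β k₀ k : Fˣ) : F)) = 0 := by
      intro k hk1
      have hnt : ∃ a ∈ K, β a (k : T) ≠ 1 := by
        by_contra hcon
        push_neg at hcon
        refine hk1 (hnd k k.2 (fun k' hk' => ?_))
        rw [hskew, hcon k' hk', inv_one]
      obtain ⟨a, haK, ha⟩ := hnt
      have := aux_char_sum_zero (F := F) K (fun t => β t (k : T))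
        (fun x hx y hy => hβ2 x y k) a haK ha
      calc (∑ k₀ : K, (((β t₀ k)⁻¹ * β k₀ k : Fˣ) : F))
          = ((β t₀ (k : T))⁻¹ : Fˣ) * ∑ k₀ : K, ((β (k₀ : T) (k : T) : Fˣ) : F) := by
            rw [Finset.mul_sum]
            refine Finset.sum_congr rfl (fun k₀ _ => ?_)
            push_cast
            ring
        _ = 0 := by rw [this, mul_zero]
    have hXval :
        (∑ k₀ : K, ∑ k : K, (((β t₀ k)⁻¹ * β k₀ k : Fˣ) : F)) = (Nat.card K : F) := by
      rw [hswap]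
      rw [Finset.sum_eq_single (1 : K)]
      · have : ∀ k₀ : K, (((β t₀ ((1 : K) : T))⁻¹ * β (k₀ : T) ((1 : K) : T) : Fˣ) : F) = 1 := by
          intro k₀
          simp only [OneMemClass.coe_one, hβ_oner]
          norm_num
        rw [Finset.sum_congr rfl (fun k₀ _ => this k₀), Finset.sum_const]
        simp [Nat.card_eq_fintype_card]
      · intro k _ hk
        exact hinner k (fun h => hk (by ext; exact h))
      · intro h
        exact absurd (Finset.mem_univ _) h
    have hXne : (∑ k₀ : K, ∑ k : K, (((β t₀ k)⁻¹ * β k₀ k : Fˣ) : F)) ≠ 0 := by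
      rw [hXval, hn]
      push_cast
      exact pow_ne_zero n h2
    obtain ⟨k₀, _, hrow⟩ := Finset.exists_ne_zero_of_sum_ne_zero hXne
    -- the row character must be trivial
    have htriv : ∀ k ∈ K, ((β t₀ k)⁻¹ * β (k₀ : T) k : Fˣ) = 1 := by
      intro k hk
      by_contra hcon
      refine hrow (aux_char_sum_zero (F := F) K
        (fun t => (β t₀ t)⁻¹ * β (k₀ : T) t) ?_ k hk hcon)
      intro x hx y hy
      show (β t₀ (x * y))⁻¹ * β (k₀ : T) (x * y) =
        ((β t₀ x)⁻¹ * β (k₀ : T) x) * ((β t₀ y)⁻¹ * β (k₀ : T) y)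
      rw [hβ1, hβ1, mul_inv]
      exact mul_mul_mul_comm _ _ _ _
    -- t₁ = t₀ * k₀⁻¹ works
    refine ⟨t₀ * (k₀ : T)⁻¹, ?_, ?_⟩
    · rw [hp, ht₀, hpinv, hK _ k₀.2]
      decide
    · intro k hk
      rw [hbt _ _ (hK k hk), hβ2, hinv_l]
      have h := htriv k hk
      have : β (k₀ : T) k = β t₀ k :=
        (inv_injective (mul_eq_one_iff_eq_inv.mp h)).symm
      rw [this, mul_inv_cancel]
  refine ⟨hne, ?_⟩
  -- coset property
  intro t₁ ht₁
  obtain ⟨ht₁p, ht₁K⟩ := ht₁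
  ext t₁'
  constructor
  · rintro ⟨ht₁'p, ht₁'K⟩
    refine ⟨t₁⁻¹ * t₁', ?_, by group⟩
    constructor
    · rw [hp, hpinv, ht₁p, ht₁'p]
      decide
    · intro s hs
      obtain ⟨r₀, hr₀, k, hk, rfl⟩ := hKgen s hs
      rw [hβ1]
      have h1 : β (t₁⁻¹ * t₁') r₀ = 1 := by
        rw [hskew, hr₀.2 (t₁⁻¹ * t₁') (by rw [hp, hpinv, ht₁p, ht₁'p]; decide), inv_one]
      have h2 : β (t₁⁻¹ * t₁') k = 1 := by
        have hb1 : β t₁ k = 1 := by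
          have := ht₁K k hk
          rwa [hbt _ _ (hK k hk)] at this
        have hb2 : β t₁' k = 1 := by
          have := ht₁'K k hk
          rwa [hbt _ _ (hK k hk)] at this
        rw [hβ2, hinv_l, hb1, hb2, inv_one, one_mul]
      rw [h1, h2, one_mul]
  · rintro ⟨r, hr, rfl⟩
    constructor
    · rw [hp, ht₁p, hr.1, add_zero]
    · intro k hk
      rw [hbt _ _ (hK k hk), hβ2]
      have hb1 : β t₁ k = 1 := by
        have := ht₁K k hk
        rwa [hbt _ _ (hK k hk)] at this
      rw [hb1, hr.2 k (hK k hk), one_mul]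
end

section
/- With D, T, p, the elements X_t, and β̃ as in the context: D is simple as a superalgebra (i.e., its only superideals are 0 and D) if and only if β̃ is nondegenerate, i.e., rad β̃ = {e}. -/
set_option linter.unusedSectionVars false
set_option maxHeartbeats 1000000

section Helpers
variable {F T D : Type*} [Field F] [AddCommGroup T] [Fintype T] [DecidableEq T]
  [Ring D] [Algebra F D] (𝒜 : T → Submodule F D) [GradedAlgebra 𝒜]

lemma stmt19_sum_dec (x : D) : ∑ t : T, (DirectSum.decompose 𝒜 x t : D) = x := by
  classical
  conv_rhs => rw [← DirectSum.sum_support_decompose 𝒜 x]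
  exact (Finset.sum_subset (Finset.subset_univ _) (by
    intro t _ ht
    simp only [DFinsupp.mem_support_toFun, ne_eq, not_not] at ht
    rw [ht]; rfl)).symm

lemma stmt19_dec_sum {ι : Type*} (s : Finset ι) (f : ι → D) (t : T) :
    (DirectSum.decompose 𝒜 (∑ i ∈ s, f i) t : D) = ∑ i ∈ s, (DirectSum.decompose 𝒜 (f i) t : D) := by
  rw [DirectSum.decompose_sum, DFinsupp.finset_sum_apply]
  exact AddSubmonoidClass.coe_finset_sum _ _

lemma stmt19_dec_mul_left {a : D} {u : T} (ha : a ∈ 𝒜 u) (d : D) (s : T) :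
    (DirectSum.decompose 𝒜 (a * d) s : D) = a * (DirectSum.decompose 𝒜 d (s - u) : D) := by
  classical
  conv_lhs => rw [← stmt19_sum_dec 𝒜 d, Finset.mul_sum, stmt19_dec_sum]
  rw [Finset.sum_congr rfl (g := fun t => if t = s - u then a * (DirectSum.decompose 𝒜 d t : D) else 0)]
  · rw [Finset.sum_ite_eq' Finset.univ (s - u) (fun t => a * (DirectSum.decompose 𝒜 d t : D))]
    simp
  intro t _
  have hmem : a * (DirectSum.decompose 𝒜 d t : D) ∈ 𝒜 (u + t) :=
    SetLike.mul_mem_graded ha (DirectSum.decompose 𝒜 d t).2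
  by_cases h : t = s - u
  · subst h
    rw [if_pos rfl]
    exact DirectSum.decompose_of_mem_same 𝒜 (by rwa [add_sub_cancel] at hmem)
  · rw [if_neg h]
    refine DirectSum.decompose_of_mem_ne 𝒜 hmem (fun hc => h ?_)
    rw [← hc]; abel

lemma stmt19_dec_mul_right {a : D} {u : T} (ha : a ∈ 𝒜 u) (d : D) (s : T) :
    (DirectSum.decompose 𝒜 (d * a) s : D) = (DirectSum.decompose 𝒜 d (s - u) : D) * a := by
  classical
  conv_lhs => rw [← stmt19_sum_dec 𝒜 d, Finset.sum_mul, stmt19_dec_sum]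
  rw [Finset.sum_congr rfl (g := fun t => if t = s - u then (DirectSum.decompose 𝒜 d t : D) * a else 0)]
  · rw [Finset.sum_ite_eq' Finset.univ (s - u) (fun t => (DirectSum.decompose 𝒜 d t : D) * a)]
    simp
  intro t _
  have hmem : (DirectSum.decompose 𝒜 d t : D) * a ∈ 𝒜 (t + u) :=
    SetLike.mul_mem_graded (DirectSum.decompose 𝒜 d t).2 ha
  by_cases h : t = s - u
  · subst h
    rw [if_pos rfl]
    exact DirectSum.decompose_of_mem_same 𝒜 (by rwa [sub_add_cancel] at hmem)
  · rw [if_neg h]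
    refine DirectSum.decompose_of_mem_ne 𝒜 hmem (fun hc => h ?_)
    rw [← hc]; abel
lemma stmt19_dec_sub (x y : D) (t : T) :
    (DirectSum.decompose 𝒜 (x - y) t : D)
      = (DirectSum.decompose 𝒜 x t : D) - (DirectSum.decompose 𝒜 y t : D) := by
  have h := map_sub (DirectSum.decomposeLinearEquiv 𝒜) x y
  simp only [DirectSum.decomposeLinearEquiv_apply] at h
  rw [h]
  rfl
lemma stmt19_dec_smul (a : F) (x : D) (t : T) :
    (DirectSum.decompose 𝒜 (a • x) t : D) = a • (DirectSum.decompose 𝒜 x t : D) := by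
  rw [DirectSum.decompose_smul]
  rfl
end Helpers

/-- Let `D` be a graded-division superalgebra over an algebraically
closed field `F` (`char F ≠ 2`) with one-dimensional homogeneous components `D_t`
spanned by `X_t`, supported on a finite abelian group `T` with parity homomorphism
`p : T → ℤ/2`, and let `β̃` be the skew-symmetric bicharacter defined by
`X_t X_s = (−1)^{p(t)p(s)} β̃(t,s) X_s X_t`. Then `D` is simple as a superalgebra
(its only superideals are `0` and `D`) iff `β̃` is nondegenerate, i.e. `rad β̃ = {e}`. -/
theorem stmt_19 {F T D : Type*} [Field F] [IsAlgClosed F] (h2 : (2 : F) ≠ 0)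
    [AddCommGroup T] [Fintype T] [DecidableEq T]
    [Ring D] [Algebra F D]
    (𝒜 : T → Submodule F D) [GradedAlgebra 𝒜]
    (hdim : ∀ t, Module.finrank F (𝒜 t) = 1)
    (hdiv : ∀ t, ∀ d ∈ 𝒜 t, d ≠ 0 → IsUnit d)
    (p : T → ZMod 2) (hp : ∀ a b, p (a + b) = p a + p b)
    (X : T → D) (hX : ∀ t, X t ∈ 𝒜 t) (hX0 : ∀ t, X t ≠ 0)
    (βt : T → T → Fˣ)
    (hβt : ∀ t s, X t * X s =
      ((((-1 : Fˣ) ^ ((p t).val * (p s).val) * βt t s : Fˣ) : F)) • (X s * X t)) :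
    (((∃ a b : D, a * b ≠ 0) ∧
      ∀ I : Submodule F D,
        (∀ (r x : D), x ∈ I → r * x ∈ I ∧ x * r ∈ I) →
        (∀ x ∈ I, (∑ t : T, if p t = 0 then ((DirectSum.decompose 𝒜 x) t : D) else 0) ∈ I) →
        I = ⊥ ∨ I = ⊤)
      ↔ {t : T | ∀ s, βt t s = 1} = {0}) := by
  classical
  -- basic facts
  have hnt : (1 : D) ≠ 0 := by
    intro h
    exact hX0 0 (by rw [← mul_one (X 0), h, mul_zero])
  haveI : Nontrivial D := ⟨⟨1, 0, hnt⟩⟩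
  have hXunit : ∀ t, IsUnit (X t) := fun t => hdiv t _ (hX t) (hX0 t)
  have hmulne : ∀ t s, X t * X s ≠ 0 := fun t s => ((hXunit t).mul (hXunit s)).ne_zero
  -- every homogeneous element is a multiple of X t
  have hspan : ∀ t, ∀ d ∈ 𝒜 t, ∃ c : F, d = c • X t := by
    intro t d hd
    have h1 := (finrank_eq_one_iff_of_nonzero' (⟨X t, hX t⟩ : 𝒜 t)
      (by simpa [Subtype.ext_iff] using hX0 t)).mp (hdim t)
    obtain ⟨c, hc⟩ := h1 ⟨d, hd⟩
    exact ⟨c, by simpa [Subtype.ext_iff, eq_comm] using hc⟩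
  have hspan0 : ∀ d ∈ 𝒜 0, ∃ c : F, d = c • 1 := by
    intro d hd
    have h1 := (finrank_eq_one_iff_of_nonzero' (⟨1, SetLike.one_mem_graded 𝒜⟩ : 𝒜 0)
      (by simpa [Subtype.ext_iff] using hnt)).mp (hdim 0)
    obtain ⟨c, hc⟩ := h1 ⟨d, hd⟩
    exact ⟨c, by simpa [Subtype.ext_iff, eq_comm] using hc⟩
  -- γ in F
  set γ : T → T → F := fun s t => (((-1 : Fˣ) ^ ((p s).val * (p t).val) * βt s t : Fˣ) : F) with hγdef
  have hγne : ∀ s t, γ s t ≠ 0 := fun s t => Units.ne_zero _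
  have hγX : ∀ s t, X s * X t = γ s t • (X t * X s) := fun s t => hβt s t
  have hcancel : ∀ (a b : F) (x : D), x ≠ 0 → a • x = b • x → a = b := by
    intro a b x hx h
    by_contra hab
    have : (a - b) • x = 0 := by rw [sub_smul, h, sub_self]
    rcases smul_eq_zero.mp this with h' | h'
    · exact hab (sub_eq_zero.mp h')
    · exact hx h'
  -- X s commutes with homogeneous elements up to γ
  have hcomm : ∀ s t (d : D), d ∈ 𝒜 t → X s * d = γ s t • (d * X s) := by
    intro s t d hd
    obtain ⟨c, rfl⟩ := hspan t d hd
    rw [mul_smul_comm, smul_mul_assoc, hγX s t, smul_comm]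
  -- multiplicativity of γ s ·
  have hγmul : ∀ s t t', γ s (t + t') = γ s t * γ s t' := by
    intro s t t'
    obtain ⟨lam, hlam⟩ := hspan (t + t') (X t * X t') (SetLike.mul_mem_graded (hX t) (hX t'))
    have hlamne : lam ≠ 0 := by
      intro h; exact hmulne t t' (by rw [hlam, h, zero_smul])
    have e1 : X s * (X t * X t') = (lam * γ s (t + t')) • (X (t + t') * X s) := by
      rw [hlam, mul_smul_comm, hγX s (t + t'), smul_smul]
    have e2 : X s * (X t * X t') = (γ s t * γ s t' * lam) • (X (t + t') * X s) := by
      calc X s * (X t * X t') = (X s * X t) * X t' := by rw [mul_assoc]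
        _ = (γ s t • (X t * X s)) * X t' := by rw [hγX s t]
        _ = γ s t • (X t * (X s * X t')) := by rw [smul_mul_assoc, mul_assoc]
        _ = γ s t • (X t * (γ s t' • (X t' * X s))) := by rw [hγX s t']
        _ = (γ s t * γ s t') • ((X t * X t') * X s) := by
              rw [mul_smul_comm, smul_smul, mul_assoc]
        _ = (γ s t * γ s t') • ((lam • X (t + t')) * X s) := by rw [← hlam]
        _ = (γ s t * γ s t' * lam) • (X (t + t') * X s) := by
              rw [smul_mul_assoc, smul_smul]
    have := hcancel _ _ _ (hmulne (t + t') s) (e1.symm.trans e2)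
    have h3 : lam * γ s (t + t') = lam * (γ s t * γ s t') := by rw [this]; ring
    exact mul_left_cancel₀ hlamne h3
  have hγzero : ∀ s, γ s 0 = 1 := by
    intro s
    have := hγmul s 0 0
    rw [add_zero] at this
    have h4 : γ s 0 * 1 = γ s 0 * γ s 0 := by rw [mul_one]; exact this
    exact (mul_left_cancel₀ (hγne s 0) h4).symm
  have hskew : ∀ s t, γ s t * γ t s = 1 := by
    intro s t
    have e1 : X s * X t = (γ s t * γ t s) • (X s * X t) := by
      conv_lhs => rw [hγX s t, hγX t s, smul_smul]
    have := hcancel (γ s t * γ t s) 1 _ (hmulne s t) (by rw [one_smul]; exact e1.symm)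
    exact this
  -- diagonal: γ t t = 1
  have hγdiag : ∀ t, γ t t = 1 := by
    intro t
    exact hcancel _ 1 _ (hmulne t t) (by rw [one_smul]; exact (hγX t t).symm)
  -- parity facts
  have hp0 : p 0 = 0 := by
    have h := hp 0 0
    rw [add_zero] at h
    exact right_eq_add.mp h
  have hZ2 : ∀ a : ZMod 2, a = 0 ∨ a = 1 := by decide
  -- γ s t = βt s t when p t = 0 or p s = 0
  have hγeven : ∀ s t, (p s).val * (p t).val = 0 → γ s t = (βt s t : F) := by
    intro s t h
    simp [hγdef, h]
  -- radical contains 0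
  have hrad0 : ∀ s, βt (0 : T) s = 1 := by
    intro s
    have h1 : γ s 0 = (βt s 0 : F) := hγeven s 0 (by simp [hp0])
    have h2' : (βt s 0 : F) = 1 := by rw [← h1, hγzero s]
    have h3 : γ 0 s = 1 := by
      have h5 := hskew 0 s
      rw [h1, h2', mul_one] at h5
      exact h5
    have h6 : γ 0 s = (βt 0 s : F) := hγeven 0 s (by simp [hp0])
    exact Units.ext (by rw [← h6, h3]; rfl)
  constructor
  · rintro ⟨-, hsimple⟩
    ext u
    simp only [Set.mem_setOf_eq, Set.mem_singleton_iff]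
    constructor
    · intro hu
      by_contra hune
      rcases hZ2 (p u) with hpu | hpu
      · -- even radical element: build a proper nonzero superideal
        exfalso
        have hγu1 : ∀ t, γ u t = 1 := by
          intro t
          rw [hγeven u t (by simp [hpu]), hu t, Units.val_one]
        have hcen : ∀ d : D, X u * d = d * X u := by
          intro d
          conv_lhs => rw [← stmt19_sum_dec 𝒜 d]
          conv_rhs => rw [← stmt19_sum_dec 𝒜 d]
          rw [Finset.mul_sum, Finset.sum_mul]
          refine Finset.sum_congr rfl fun t _ => ?_
          rw [hcomm u t _ (DirectSum.decompose 𝒜 d t).2, hγu1 t, one_smul]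
        set n := addOrderOf u with hn
        have hnpos : 0 < n := addOrderOf_pos u
        have hn1 : n ≠ 1 := fun h => hune (AddMonoid.addOrderOf_eq_one_iff.mp h)
        have hn2 : 2 ≤ n := by omega
        have hpow : X u ^ n ∈ 𝒜 0 := by
          have := SetLike.pow_mem_graded n (hX u)
          rwa [addOrderOf_nsmul_eq_zero u] at this
        obtain ⟨lam, hlam⟩ := hspan0 _ hpow
        have hlamne : lam ≠ 0 := fun h =>
          ((hXunit u).pow n).ne_zero (by rw [hlam, h, zero_smul])
        obtain ⟨μ, hμ⟩ := IsAlgClosed.exists_root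
          (Polynomial.X ^ n - Polynomial.C lam) (by
            rw [Polynomial.degree_X_pow_sub_C hnpos]
            exact_mod_cast (show n ≠ 0 by omega))
        have hμn : μ ^ n = lam := by
          have h' := hμ
          simp only [Polynomial.IsRoot, Polynomial.eval_sub, Polynomial.eval_pow,
            Polynomial.eval_X, Polynomial.eval_C] at h'
          exact sub_eq_zero.mp h'
        set Q := (Polynomial.X ^ n - Polynomial.C lam) / (Polynomial.X - Polynomial.C μ) with hQdef
        have hPQ : (Polynomial.X - Polynomial.C μ) * Q = Polynomial.X ^ n - Polynomial.C lam :=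
          Polynomial.mul_div_eq_iff_isRoot.mpr hμ
        have hPmonic : (Polynomial.X ^ n - Polynomial.C lam).Monic :=
          Polynomial.monic_X_pow_sub_C _ (by omega)
        have hQmonic : Q.Monic :=
          (Polynomial.monic_X_sub_C μ).of_mul_monic_left (by rw [hPQ]; exact hPmonic)
        have hQdeg : Q.natDegree = n - 1 := by
          have hdeg := congrArg Polynomial.natDegree hPQ
          rw [Polynomial.natDegree_mul (Polynomial.X_sub_C_ne_zero μ) hQmonic.ne_zero,
            Polynomial.natDegree_X_sub_C, Polynomial.natDegree_X_pow_sub_C] at hdeg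
          omega
        set c : D := X u - algebraMap F D μ with hcdef
        set e : D := Polynomial.aeval (X u) Q with hedef
        have hce : c * e = 0 := by
          have hc' : c = Polynomial.aeval (X u) (Polynomial.X - Polynomial.C μ) := by
            rw [hcdef, map_sub, Polynomial.aeval_X, Polynomial.aeval_C]
          rw [hc', hedef, ← map_mul, hPQ, map_sub, map_pow, Polynomial.aeval_X,
            Polynomial.aeval_C, hlam, Algebra.algebraMap_eq_smul_one, sub_self]
        have hcd : ∀ d : D, c * d = d * c := by
          intro d
          rw [hcdef, sub_mul, mul_sub, hcen d, Algebra.commutes]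
        have hene : e ≠ 0 := by
          intro h0
          have hdec : (DirectSum.decompose 𝒜 e ((n - 1) • u) : D) = X u ^ (n - 1) := by
            rw [hedef, Polynomial.aeval_eq_sum_range, hQdeg, stmt19_dec_sum]
            rw [Finset.sum_congr rfl
              (g := fun j => if j = n - 1 then Q.coeff j • X u ^ j else 0) ?hcg]
            · rw [Finset.sum_ite_eq' _ (n - 1) (fun j => Q.coeff j • X u ^ j)]
              rw [if_pos (Finset.mem_range.mpr (by omega))]
              have : Q.coeff (n - 1) = 1 := by
                have := hQmonic.coeff_natDegree
                rwa [hQdeg] at this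
              rw [this, one_smul]
            case hcg =>
              intro j hj
              beta_reduce
              have hjmem : Q.coeff j • X u ^ j ∈ 𝒜 (j • u) :=
                Submodule.smul_mem _ _ (SetLike.pow_mem_graded j (hX u))
              by_cases hj' : j = n - 1
              · subst hj'
                rw [if_pos rfl]
                exact DirectSum.decompose_of_mem_same 𝒜 hjmem
              · rw [if_neg hj']
                refine DirectSum.decompose_of_mem_ne 𝒜 hjmem (fun hc => ?_)
                have hjle : j ≤ n - 1 := by
                  have := Finset.mem_range.mp hj; omega
                have h5 : ((n - 1 - j) • u : T) + j • u = (n - 1) • u := by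
                  rw [← add_nsmul, Nat.sub_add_cancel hjle]
                rw [hc] at h5
                have h6 : ((n - 1 - j) • u : T) = 0 := add_eq_right.mp h5
                have h8 : n ∣ n - 1 - j := addOrderOf_dvd_of_nsmul_eq_zero h6
                have h9 : n - 1 - j = 0 := Nat.eq_zero_of_dvd_of_lt h8 (by omega)
                exact hj' (by omega)
          rw [h0] at hdec
          simp only [DirectSum.decompose_zero, DirectSum.zero_apply,
            ZeroMemClass.coe_zero] at hdec
          exact ((hXunit u).pow (n - 1)).ne_zero hdec.symm
        set I : Submodule F D := LinearMap.range (LinearMap.mulLeft F c) with hIdef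
        have hmemI : ∀ x : D, x ∈ I ↔ ∃ d, c * d = x := by
          intro x
          simp [hIdef, LinearMap.mem_range, LinearMap.mulLeft_apply]
        have hclose : ∀ (r x : D), x ∈ I → r * x ∈ I ∧ x * r ∈ I := by
          intro r x hx
          obtain ⟨d, rfl⟩ := (hmemI x).mp hx
          constructor
          · exact (hmemI _).mpr ⟨r * d, by rw [← mul_assoc, hcd r, mul_assoc]⟩
          · exact (hmemI _).mpr ⟨d * r, by rw [mul_assoc]⟩
        have heven : ∀ x ∈ I,
            (∑ t : T, if p t = 0 then ((DirectSum.decompose 𝒜 x) t : D) else 0) ∈ I := by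
          intro x hx
          obtain ⟨d, rfl⟩ := (hmemI x).mp hx
          refine (hmemI _).mpr ⟨∑ t : T, if p t = 0 then (DirectSum.decompose 𝒜 d t : D) else 0, ?_⟩
          have hsplit : ∀ t : T, (DirectSum.decompose 𝒜 (c * d) t : D) =
              X u * (DirectSum.decompose 𝒜 d (t - u) : D) - μ • (DirectSum.decompose 𝒜 d t : D) := by
            intro t
            rw [hcdef, sub_mul, stmt19_dec_sub, stmt19_dec_mul_left 𝒜 (hX u) d t]
            congr 1
            rw [← Algebra.smul_def, stmt19_dec_smul]
          calc c * ∑ t : T, (if p t = 0 then (DirectSum.decompose 𝒜 d t : D) else 0)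
              = X u * (∑ t : T, if p t = 0 then (DirectSum.decompose 𝒜 d t : D) else 0)
                - μ • (∑ t : T, if p t = 0 then (DirectSum.decompose 𝒜 d t : D) else 0) := by
                rw [hcdef, sub_mul, ← Algebra.smul_def]
            _ = (∑ t : T, if p t = 0 then X u * (DirectSum.decompose 𝒜 d t : D) else 0)
                - ∑ t : T, (if p t = 0 then μ • (DirectSum.decompose 𝒜 d t : D) else 0) := by
                rw [Finset.mul_sum, Finset.smul_sum]
                congr 1 <;> exact Finset.sum_congr rfl fun t _ => by
                  by_cases h : p t = 0 <;> simp [h]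
            _ = (∑ t : T, if p t = 0 then X u * (DirectSum.decompose 𝒜 d (t - u) : D) else 0)
                - ∑ t : T, (if p t = 0 then μ • (DirectSum.decompose 𝒜 d t : D) else 0) := by
                congr 1
                refine Fintype.sum_equiv (Equiv.addRight u) _ _ fun t => ?_
                simp only [Equiv.coe_addRight]
                have hpt : p (t + u) = p t := by
                  rw [hp t u, hpu, add_zero]
                simp only [hpt]
                rw [add_sub_cancel_right]
            _ = ∑ t : T, (if p t = 0 then (DirectSum.decompose 𝒜 (c * d) t : D) else 0) := by
                rw [← Finset.sum_sub_distrib]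
                refine Finset.sum_congr rfl fun t _ => ?_
                rw [hsplit t]
                by_cases h : p t = 0 <;> simp [h]
        rcases hsimple I hclose heven with hbot | htop
        · have hcI : c ∈ I := (hmemI c).mpr ⟨1, mul_one c⟩
          have hcne : c ≠ 0 := by
            intro h
            have hdecc : (DirectSum.decompose 𝒜 c u : D) = X u := by
              rw [hcdef, stmt19_dec_sub]
              rw [DirectSum.decompose_of_mem_same 𝒜 (hX u)]
              rw [DirectSum.decompose_of_mem_ne 𝒜
                (show algebraMap F D μ ∈ 𝒜 0 by
                  rw [Algebra.algebraMap_eq_smul_one]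
                  exact Submodule.smul_mem _ _ (SetLike.one_mem_graded 𝒜))
                (Ne.symm hune), sub_zero]
            rw [h] at hdecc
            simp only [DirectSum.decompose_zero, DirectSum.zero_apply,
              ZeroMemClass.coe_zero] at hdecc
            exact hX0 u hdecc.symm
          rw [hbot] at hcI
          exact hcne ((Submodule.mem_bot F).mp hcI)
        · have h1I : (1 : D) ∈ I := htop ▸ Submodule.mem_top
          obtain ⟨d, hd⟩ := (hmemI 1).mp h1I
          refine hene ?_
          calc e = e * 1 := (mul_one e).symm
            _ = e * (c * d) := by rw [hd]
            _ = (e * c) * d := (mul_assoc _ _ _).symm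
            _ = (c * e) * d := by rw [← hcd e]
            _ = 0 := by rw [hce, zero_mul]
      · -- odd radical element: contradiction with char ≠ 2
        have h1 : γ u u = 1 := hγdiag u
        have hval : (p u).val = 1 := by rw [hpu]; rfl
        have h2' : γ u u = -(βt u u : F) := by
          simp [hγdef, hval]
        have h3 : (βt u u : F) = 1 := by rw [hu u, Units.val_one]
        rw [h2', h3] at h1
        exact h2 (by linear_combination -h1)
    · rintro rfl
      exact hrad0
  · intro hrad
    refine ⟨⟨1, 1, by rw [mul_one]; exact hnt⟩, ?_⟩
    intro I hImul hIeven
    rw [or_iff_not_imp_left]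
    intro hne
    obtain ⟨x, hxI, hxne⟩ := Submodule.exists_mem_ne_zero_of_ne_bot hne
    -- step 1: find a nonzero homogeneous element of I
    have main : ∀ N : ℕ, ∀ y : D, y ∈ I → y ≠ 0 →
        (∀ t t', (DirectSum.decompose 𝒜 y t : D) ≠ 0 →
          (DirectSum.decompose 𝒜 y t' : D) ≠ 0 → p t = p t') →
        (Finset.univ.filter fun t => (DirectSum.decompose 𝒜 y t : D) ≠ 0).card ≤ N →
        ∃ t, ∃ d : D, d ∈ 𝒜 t ∧ d ≠ 0 ∧ d ∈ I := by
      intro N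
      induction N with
      | zero =>
        intro y hyI hy0 hpar hcard
        exfalso
        apply hy0
        rw [← stmt19_sum_dec 𝒜 y]
        refine Finset.sum_eq_zero fun t _ => ?_
        by_contra h
        have hmem : t ∈ Finset.univ.filter fun t => (DirectSum.decompose 𝒜 y t : D) ≠ 0 := by
          simp only [Finset.mem_filter, Finset.mem_univ, true_and]
          simpa using h
        have := Finset.card_pos.mpr ⟨t, hmem⟩
        omega
      | succ N ih =>
        intro y hyI hy0 hpar hcard
        set S := Finset.univ.filter fun t => (DirectSum.decompose 𝒜 y t : D) ≠ 0 with hS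
        by_cases hcard1 : S.card ≤ 1
        · -- y is homogeneous
          have hSne : S.Nonempty := by
            rw [Finset.nonempty_iff_ne_empty]
            intro h
            apply hy0
            rw [← stmt19_sum_dec 𝒜 y]
            refine Finset.sum_eq_zero fun t _ => ?_
            by_contra h'
            have : t ∈ S := by
              simp only [hS, Finset.mem_filter, Finset.mem_univ, true_and]
              simpa using h'
            rw [h] at this
            exact absurd this (Finset.notMem_empty t)
          obtain ⟨t₀, ht₀⟩ := hSne
          have hyhom : y = (DirectSum.decompose 𝒜 y t₀ : D) := by
            conv_lhs => rw [← stmt19_sum_dec 𝒜 y]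
            rw [Finset.sum_eq_single t₀]
            · intro b _ hb
              by_contra h'
              have hb' : b ∈ S := by
                simp only [hS, Finset.mem_filter, Finset.mem_univ, true_and]
                simpa using h'
              have : 1 < S.card := Finset.one_lt_card.mpr ⟨b, hb', t₀, ht₀, hb⟩
              omega
            · intro h
              exact absurd (Finset.mem_univ t₀) h
          refine ⟨t₀, y, ?_, hy0, hyI⟩
          rw [hyhom]
          exact (DirectSum.decompose 𝒜 y t₀).2
        · -- at least two components
          have h2c : 1 < S.card := by omega
          obtain ⟨t₀, ht₀, t₁, ht₁, hne01⟩ := Finset.one_lt_card.mp h2c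
          have hdec0 : (DirectSum.decompose 𝒜 y t₀ : D) ≠ 0 := by
            have := ht₀
            simp only [hS, Finset.mem_filter, Finset.mem_univ, true_and] at this
            exact this
          have hdec1 : (DirectSum.decompose 𝒜 y t₁ : D) ≠ 0 := by
            have := ht₁
            simp only [hS, Finset.mem_filter, Finset.mem_univ, true_and] at this
            exact this
          have hu : t₀ - t₁ ≠ 0 := sub_ne_zero.mpr hne01
          have hpu : p (t₀ - t₁) = 0 := by
            have heq := hpar t₀ t₁ hdec0 hdec1
            have h1 : p (t₀ - t₁) + p t₁ = p t₀ := by rw [← hp, sub_add_cancel]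
            rw [heq] at h1
            have h2' : p (t₀ - t₁) + p t₁ = 0 + p t₁ := by rw [h1, zero_add]
            exact add_right_cancel h2'
          obtain ⟨s, hs⟩ : ∃ s, βt (t₀ - t₁) s ≠ 1 := by
            by_contra h
            push_neg at h
            have hmem : (t₀ - t₁) ∈ {t : T | ∀ s, βt t s = 1} := h
            rw [hrad] at hmem
            exact hu hmem
          have hγs : γ s (t₀ - t₁) ≠ 1 := by
            intro h
            have h2' : γ (t₀ - t₁) s = (βt (t₀ - t₁) s : F) := hγeven _ s (by simp [hpu])
            have h3 := hskew s (t₀ - t₁)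
            rw [h, one_mul] at h3
            exact hs (Units.ext (by rw [← h2', h3]; rfl))
          set z := X s * y - γ s t₁ • (y * X s) with hz
          have hzI : z ∈ I := Submodule.sub_mem I (hImul (X s) y hyI).1
            (Submodule.smul_mem _ _ (hImul (X s) y hyI).2)
          have hdecz : ∀ w, (DirectSum.decompose 𝒜 z w : D)
              = (γ s (w - s) - γ s t₁) • ((DirectSum.decompose 𝒜 y (w - s) : D) * X s) := by
            intro w
            rw [hz, stmt19_dec_sub, stmt19_dec_smul, stmt19_dec_mul_left 𝒜 (hX s) y w,
              stmt19_dec_mul_right 𝒜 (hX s) y w,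
              hcomm s (w - s) _ (DirectSum.decompose 𝒜 y (w - s)).2, sub_smul]
          have hcoefne : γ s t₀ - γ s t₁ ≠ 0 := by
            have hmul : γ s t₀ = γ s t₁ * γ s (t₀ - t₁) := by
              rw [← hγmul s t₁ (t₀ - t₁), add_sub_cancel]
            rw [hmul]
            intro hcc
            apply hγs
            have : γ s t₁ * (γ s (t₀ - t₁) - 1) = 0 := by ring_nf; linear_combination hcc
            rcases mul_eq_zero.mp this with h' | h'
            · exact absurd h' (hγne s t₁)
            · exact sub_eq_zero.mp h'
          have hprod : (DirectSum.decompose 𝒜 y t₀ : D) * X s ≠ 0 :=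
            ((hdiv t₀ _ (DirectSum.decompose 𝒜 y t₀).2 hdec0).mul (hXunit s)).ne_zero
          have hz0 : z ≠ 0 := by
            intro h
            have hd := hdecz (s + t₀)
            rw [h] at hd
            simp only [DirectSum.decompose_zero, DirectSum.zero_apply,
              ZeroMemClass.coe_zero] at hd
            rw [add_sub_cancel_left] at hd
            rcases smul_eq_zero.mp hd.symm with h' | h'
            · exact hcoefne h'
            · exact hprod h'
          have hzne' : ∀ a : T, (DirectSum.decompose 𝒜 z a : D) ≠ 0 →
              (DirectSum.decompose 𝒜 y (a - s) : D) ≠ 0 := by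
            intro a ha h'
            apply ha
            rw [hdecz a, h', zero_mul, smul_zero]
          have hparz : ∀ t t', (DirectSum.decompose 𝒜 z t : D) ≠ 0 →
              (DirectSum.decompose 𝒜 z t' : D) ≠ 0 → p t = p t' := by
            intro a b ha hb
            have heq := hpar (a - s) (b - s) (hzne' a ha) (hzne' b hb)
            have h1 : p a = p (a - s) + p s := by rw [← hp, sub_add_cancel]
            have h2' : p b = p (b - s) + p s := by rw [← hp, sub_add_cancel]
            rw [h1, h2', heq]
          have hcardz : (Finset.univ.filter
              fun t => (DirectSum.decompose 𝒜 z t : D) ≠ 0).card ≤ N := by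
            have hsub : ∀ w ∈ (Finset.univ.filter
                fun t => (DirectSum.decompose 𝒜 z t : D) ≠ 0), w - s ∈ S.erase t₁ := by
              intro w hw
              simp only [Finset.mem_filter, Finset.mem_univ, true_and] at hw
              refine Finset.mem_erase.mpr ⟨?_, ?_⟩
              · intro h
                apply hw
                rw [hdecz w, h, sub_self, zero_smul]
              · simp only [hS, Finset.mem_filter, Finset.mem_univ, true_and]
                exact hzne' w hw
            have hinj : Set.InjOn (fun w => w - s) ((Finset.univ.filter
                fun t => (DirectSum.decompose 𝒜 z t : D) ≠ 0) : Finset T) := by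
              intro a _ b _ h
              simpa using sub_left_injective h
            have := Finset.card_le_card_of_injOn _ hsub hinj
            have herase := Finset.card_erase_of_mem ht₁
            omega
          exact ih z hzI hz0 hparz hcardz
    have key : ∃ t, ∃ d : D, d ∈ 𝒜 t ∧ d ≠ 0 ∧ d ∈ I := by
      set x0 := ∑ t : T, if p t = 0 then ((DirectSum.decompose 𝒜 x) t : D) else 0 with hx0def
      have hx0I : x0 ∈ I := hIeven x hxI
      have hdecx0 : ∀ w, (DirectSum.decompose 𝒜 x0 w : D)
          = if p w = 0 then (DirectSum.decompose 𝒜 x w : D) else 0 := by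
        intro w
        rw [hx0def, stmt19_dec_sum]
        rw [Finset.sum_congr rfl (g := fun t => if t = w then
          (if p t = 0 then (DirectSum.decompose 𝒜 x t : D) else 0) else 0) ?hg]
        · rw [Finset.sum_ite_eq' Finset.univ w
            (fun t => if p t = 0 then (DirectSum.decompose 𝒜 x t : D) else 0)]
          simp
        case hg =>
          intro t _
          beta_reduce
          have hmem : (if p t = 0 then (DirectSum.decompose 𝒜 x t : D) else 0) ∈ 𝒜 t := by
            split
            · exact (DirectSum.decompose 𝒜 x t).2
            · exact zero_mem _
          by_cases h : t = w
          · subst h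
            rw [if_pos rfl]
            exact DirectSum.decompose_of_mem_same 𝒜 hmem
          · rw [if_neg h]
            exact DirectSum.decompose_of_mem_ne 𝒜 hmem h
      by_cases hx0z : x0 = 0
      · -- x is "odd": all components have parity 1
        have hodd : ∀ t, (DirectSum.decompose 𝒜 x t : D) ≠ 0 → p t = 1 := by
          intro t ht
          rcases hZ2 (p t) with h | h
          · exfalso
            have := hdecx0 t
            rw [hx0z, if_pos h] at this
            simp only [DirectSum.decompose_zero, DirectSum.zero_apply,
              ZeroMemClass.coe_zero] at this
            exact ht this.symm
          · exact h
        exact main _ x hxI hxne (fun t t' ht ht' => by rw [hodd t ht, hodd t' ht']) le_rfl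
      · -- even part is nonzero
        have heven : ∀ t, (DirectSum.decompose 𝒜 x0 t : D) ≠ 0 → p t = 0 := by
          intro t ht
          by_contra h
          apply ht
          rw [hdecx0 t, if_neg h]
        exact main _ x0 hx0I hx0z (fun t t' ht ht' => by rw [heven t ht, heven t' ht']) le_rfl
    obtain ⟨t, d, hdmem, hd0, hdI⟩ := key
    obtain ⟨v, hv⟩ := hdiv t d hdmem hd0
    have h1I : (1 : D) ∈ I := by
      have := (hImul (↑v⁻¹) d hdI).1
      rwa [← hv, Units.inv_mul] at this
    ext w
    simp only [Submodule.mem_top, iff_true]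
    have := (hImul w 1 h1I).1
    rwa [mul_one] at this
end
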